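/- arXiv:2205.11991 — 7 statements merged into one kernel-verified Lean document; each statement's English description precedes it below -/
import Mathlib

section
/- Let X ⊆ ℝⁿ be compact, f : X × U × N → X a Lipschitz continuous dynamics function, π : X → U a Lipschitz continuous policy, and d a probability distribution on N. Let X_s ⊆ X be Borel measurable with nonempty interior and closed under the system dynamics, i.e. for every x ∈ X_s and every ω ∈ N, f(x, π(x), ω) ∈ X_s. Suppose there exists a ranking supermartingale for X_s, i.e. a nonnegative continuous function V : X → ℝ and an ε > 0 such that for every x ∈ X \ X_s, E_{ω∼d}[V(f(x, π(x), ω))] ≤ V(x) − ε. Then X_s is almost-surely asymptotically stable: for every initial state x₀ ∈ X, for d^ℕ-almost every noise sequence ω = (ω₀, ω₁, …) ∈ N^ℕ, the trajectory x_{t+1} = f(x_t, π(x_t), ω_t) satisfies lim_{t→∞} inf_{y∈X_s} ‖x_t − y‖₁ = 0. -/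
open MeasureTheory Filter

/-- ℝⁿ equipped with the ℓ¹ norm. -/
abbrev L1 (n : ℕ) := PiLp 1 fun _ : Fin n => ℝ

instance (n : ℕ) : MeasurableSpace (L1 n) := MeasurableSpace.comap WithLp.ofLp MeasurableSpace.pi
instance (n : ℕ) : BorelSpace (L1 n) := PiLp.borelSpace 1

/-- Trajectory of the closed-loop system `x_{t+1} = f(x_t, π(x_t), ω_t)`. -/
def traj {X U N : Type*} (f : X → U → N → X) (π : X → U)
    (x₀ : X) (ω : ℕ → N) : ℕ → X
  | 0 => x₀
  | t + 1 => f (traj f π x₀ ω t) (π (traj f π x₀ ω t)) (ω t)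

lemma integrable_of_bounded_meas {α : Type*} [MeasurableSpace α] {ν : MeasureTheory.Measure α}
    [MeasureTheory.IsFiniteMeasure ν] {g : α → ℝ} (hg : Measurable g) {M : ℝ}
    (hM : ∀ a, |g a| ≤ M) : MeasureTheory.Integrable g ν :=
  (MeasureTheory.integrable_const M).mono' hg.aestronglyMeasurable
    (Filter.Eventually.of_forall fun a => by simpa [Real.norm_eq_abs] using hM a)


/-- If a ranking supermartingale exists for a set `Xs` that is closed under
the dynamics and has nonempty interior, then `Xs` is almost-surely asymptotically stable:
from every initial state, for `d^ℕ`-almost every noise sequence, the ℓ¹ distance of the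
trajectory to `Xs` tends to `0`. -/
theorem stability_of_ranking_supermartingale
    {n m p : ℕ} (X : Set (L1 n)) (U : Set (L1 m)) (N : Set (L1 p))
    (hX : IsCompact X)
    (f : X → U → N → X) (π : X → U)
    -- `f` and `π` are Lipschitz continuous (ℓ¹ norms):
    (Lf Lπ : NNReal)
    (hf : ∀ (x x' : X) (u u' : U) (ω ω' : N),
      dist (f x u ω) (f x' u' ω') ≤ Lf * (dist x x' + dist u u' + dist ω ω'))
    (hπ : ∀ x x' : X, dist (π x) (π x') ≤ Lπ * dist x x')
    -- `d` is a probability distribution on `N`: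
    (d : Measure N) [IsProbabilityMeasure d]
    -- `μ` is the infinite product measure `d^ℕ` on `N^ℕ`, characterized on cylinders:
    (μ : Measure (ℕ → N)) [IsProbabilityMeasure μ]
    (hμ : ∀ (s : Finset ℕ) (B : ℕ → Set N), (∀ i, MeasurableSet (B i)) →
      μ {ω | ∀ i ∈ s, ω i ∈ B i} = ∏ i ∈ s, d (B i))
    -- `Xs ⊆ X` is Borel measurable, has nonempty interior, and is closed under the dynamics:
    (Xs : Set (L1 n)) (hXsX : Xs ⊆ X) (hXsMeas : MeasurableSet Xs)
    (hXsInt : (interior Xs).Nonempty)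
    (hclosed : ∀ (x : X) (ω : N), (x : L1 n) ∈ Xs → (f x (π x) ω : L1 n) ∈ Xs)
    -- `V` is a ranking supermartingale for `Xs`:
    (V : X → ℝ) (hVcont : Continuous V) (hVnonneg : ∀ x, 0 ≤ V x)
    (ε : ℝ) (hε : 0 < ε)
    (hdec : ∀ x : X, (x : L1 n) ∉ Xs → ∫ ω, V (f x (π x) ω) ∂d ≤ V x - ε)
    -- then `Xs` is a.s. asymptotically stable:
    (x₀ : X) :
    ∀ᵐ ω ∂μ, Tendsto (fun t => Metric.infDist ((traj f π x₀ ω t : X) : L1 n) Xs)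
      atTop (nhds 0) := by
  classical
  haveI : CompactSpace X := isCompact_iff_compactSpace.mp hX
  haveI : Nonempty X := ⟨x₀⟩
  haveI hNne : Nonempty N := by
    by_contra h
    rw [not_nonempty_iff] at h
    have h1 : d Set.univ = 1 := measure_univ
    rw [Set.univ_eq_empty_iff.mpr h, measure_empty] at h1
    exact zero_ne_one h1
  -- the one-step map
  set step : X × N → X := fun q => f q.1 (π q.1) q.2 with hstep_def
  have hstepLip : LipschitzWith (Lf * (Lπ + 2)) step := by
    apply LipschitzWith.of_dist_le_mul
    rintro ⟨x, w⟩ ⟨x', w'⟩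
    have h1 := hf x x' (π x) (π x') w w'
    have h2 := hπ x x'
    have h3 : dist x x' ≤ dist (⟨x, w⟩ : X × N) ⟨x', w'⟩ := le_max_left _ _
    have h4 : dist w w' ≤ dist (⟨x, w⟩ : X × N) ⟨x', w'⟩ := le_max_right _ _
    have hLf : (0:ℝ) ≤ Lf := Lf.coe_nonneg
    have hLπ : (0:ℝ) ≤ Lπ := Lπ.coe_nonneg
    have hd : (0:ℝ) ≤ dist (⟨x, w⟩ : X × N) ⟨x', w'⟩ := dist_nonneg
    have : (((Lf * (Lπ + 2) : NNReal)) : ℝ) = (Lf : ℝ) * ((Lπ : ℝ) + 2) := by push_cast; ring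
    rw [this]
    calc dist (step (x, w)) (step (x', w'))
        ≤ Lf * (dist x x' + dist (π x) (π x') + dist w w') := h1
      _ ≤ (Lf : ℝ) * ((Lπ : ℝ) + 2) * dist (⟨x, w⟩ : X × N) ⟨x', w'⟩ := by
          have h5 : dist (π x) (π x') ≤ (Lπ : ℝ) * dist (⟨x, w⟩ : X × N) ⟨x', w'⟩ :=
            h2.trans (by nlinarith)
          have hsum : dist x x' + dist (π x) (π x') + dist w w'
              ≤ ((Lπ : ℝ) + 2) * dist (⟨x, w⟩ : X × N) ⟨x', w'⟩ := by nlinarith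
          nlinarith [mul_le_mul_of_nonneg_left hsum hLf]
  have hstepMeas : Measurable step := hstepLip.continuous.measurable
  -- trajectory measurability
  have hx_meas : ∀ t, Measurable (fun ω : ℕ → N => traj f π x₀ ω t) := by
    intro t
    induction t with
    | zero => exact measurable_const
    | succ t ih =>
      have : (fun ω : ℕ → N => traj f π x₀ ω (t+1))
          = fun ω => step (traj f π x₀ ω t, ω t) := rfl
      rw [this]
      exact hstepMeas.comp (ih.prodMk (measurable_pi_apply t))
  -- trajectory depends only on earlier coordinates
  have htraj_congr : ∀ (t : ℕ) (ω ω' : ℕ → N), (∀ s, s < t → ω s = ω' s) →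
      traj f π x₀ ω t = traj f π x₀ ω' t := by
    intro t
    induction t with
    | zero => intro ω ω' _; rfl
    | succ t ih =>
      intro ω ω' h
      have h1 : traj f π x₀ ω t = traj f π x₀ ω' t :=
        ih ω ω' fun s hs => h s (hs.trans (Nat.lt_succ_self t))
      show f (traj f π x₀ ω t) (π (traj f π x₀ ω t)) (ω t) = _
      rw [h1, h t (Nat.lt_succ_self t)]
      rfl
  -- restriction and extension maps
  set res : ∀ k : ℕ, (ℕ → N) → (Fin k → N) := fun k ω i => ω i with hres_def
  set ext : ∀ k : ℕ, (Fin k → N) → (ℕ → N) :=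
    fun k v i => if h : i < k then v ⟨i, h⟩ else Classical.arbitrary N with hext_def
  have hres_meas : ∀ k, Measurable (res k) := fun k =>
    measurable_pi_lambda _ fun i => measurable_pi_apply _
  have hext_meas : ∀ k, Measurable (ext k) := by
    intro k
    apply measurable_pi_lambda
    intro i
    by_cases h : i < k
    · simpa [hext_def, h] using measurable_pi_apply (⟨i, h⟩ : Fin k)
    · simpa [hext_def, h] using measurable_const
  have hextres : ∀ (k s : ℕ) (ω : ℕ → N), s ≤ k →
      traj f π x₀ (ext k (res k ω)) s = traj f π x₀ ω s := by
    intro k s ω hsk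
    apply htraj_congr
    intro i hi
    have hik : i < k := lt_of_lt_of_le hi hsk
    simp [hext_def, hres_def, hik]
  -- pushforward of μ under res k is the finite product measure
  have hmap : ∀ k : ℕ, Measure.map (res k) μ = Measure.pi (fun _ : Fin k => d) := by
    intro k
    refine (Measure.pi_eq ?_).symm
    intro B hB
    rw [Measure.map_apply (hres_meas k) (MeasurableSet.univ_pi hB)]
    have hset : res k ⁻¹' Set.pi Set.univ B
        = {ω : ℕ → N | ∀ i ∈ Finset.range k, ω i ∈ (fun j : ℕ =>
            if h : j < k then B ⟨j, h⟩ else Set.univ) i} := by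
      ext ω
      simp only [Set.mem_preimage, Set.mem_pi, Set.mem_univ, forall_true_left,
        Set.mem_setOf_eq, Finset.mem_range]
      constructor
      · intro h i hik
        simpa [hik] using h ⟨i, hik⟩
      · intro h i
        have := h i i.isLt
        simpa [i.isLt] using this
    rw [hset, hμ _ _ (by
      intro i
      by_cases h : i < k
      · simpa [h] using hB ⟨i, h⟩
      · simp [h])]
    rw [← Fin.prod_univ_eq_prod_range (fun j => d (if h : j < k then B ⟨j, h⟩ else Set.univ)) k]
    apply Finset.prod_congr rfl
    intro i _
    simp [i.isLt]
  -- bound on V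
  obtain ⟨M, hM⟩ : ∃ M : ℝ, ∀ x : X, V x ≤ M := by
    obtain ⟨M, hM⟩ := (isCompact_range hVcont).bddAbove
    exact ⟨M, fun x => hM ⟨x, rfl⟩⟩
  have hMabs : ∀ x : X, |V x| ≤ M := fun x => by
    rw [abs_of_nonneg (hVnonneg x)]; exact hM x
  -- the "still outside" sets
  set B : ℕ → Set (ℕ → N) :=
    fun t => {ω | ∀ s, s < t → ((traj f π x₀ ω s : X) : L1 n) ∉ Xs} with hB_def
  have hB_meas : ∀ t, MeasurableSet (B t) := by
    intro t
    have : B t = ⋂ s ∈ Finset.range t,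
        (fun ω => ((traj f π x₀ ω s : X) : L1 n)) ⁻¹' Xsᶜ := by
      ext ω; simp [hB_def]
    rw [this]
    exact MeasurableSet.biInter (Finset.range t).countable_toSet fun s _ =>
      (measurable_subtype_coe.comp (hx_meas s)) hXsMeas.compl
  have hB_anti : ∀ t, B (t+1) ⊆ B t := fun t ω hω s hs =>
    hω s (hs.trans (Nat.lt_succ_self t))
  -- indicator integrands are integrable
  have hInd_meas : ∀ (t : ℕ) (S : Set (ℕ → N)), MeasurableSet S →
      Measurable (S.indicator (fun ω => V (traj f π x₀ ω t))) := fun t S hS =>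
    ((hVcont.measurable).comp (hx_meas t)).indicator hS
  have hInd_int : ∀ (t : ℕ) (S : Set (ℕ → N)), MeasurableSet S →
      Integrable (S.indicator (fun ω => V (traj f π x₀ ω t))) μ := by
    intro t S hS
    refine integrable_of_bounded_meas (hInd_meas t S hS) (M := M) ?_
    intro ω
    by_cases h : ω ∈ S
    · simpa [Set.indicator_of_mem h] using hMabs _
    · simp only [Set.indicator_of_notMem h, abs_zero]
      exact le_trans (abs_nonneg _) (hMabs x₀)
  -- the key one-step decrease inequality
  have key : ∀ t : ℕ,
      ∫ ω, (B (t+1)).indicator (fun ω' => V (traj f π x₀ ω' (t+1))) ω ∂μ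
        ≤ ∫ ω, (B (t+1)).indicator (fun ω' => V (traj f π x₀ ω' t)) ω ∂μ
          - ε * (μ (B (t+1))).toReal := by
    intro t
    set π_t : Measure (Fin t → N) := Measure.pi (fun _ : Fin t => d) with hπt_def
    haveI : IsProbabilityMeasure π_t := by rw [hπt_def]; infer_instance
    set y : (Fin t → N) → X := fun v => traj f π x₀ (ext t v) t with hy_def
    have hy_meas : Measurable y := (hx_meas t).comp (hext_meas t)
    set C : Set (Fin t → N) :=
      {v | ∀ s, s < t + 1 → ((traj f π x₀ (ext t v) s : X) : L1 n) ∉ Xs} with hC_def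
    have hC_meas : MeasurableSet C := by
      have : C = ⋂ s ∈ Finset.range (t+1),
          (fun v => ((traj f π x₀ (ext t v) s : X) : L1 n)) ⁻¹' Xsᶜ := by
        ext v; simp [hC_def]
      rw [this]
      exact MeasurableSet.biInter (Finset.range (t+1)).countable_toSet fun s _ =>
        (measurable_subtype_coe.comp ((hx_meas s).comp (hext_meas t))) hXsMeas.compl
    have hBC : ∀ ω, ω ∈ B (t+1) ↔ res t ω ∈ C := by
      intro ω
      constructor
      · intro h s hs
        rw [hextres t s ω (Nat.lt_succ_iff.mp hs)]
        exact h s hs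
      · intro h s hs
        have := h s hs
        rwa [hextres t s ω (Nat.lt_succ_iff.mp hs)] at this
    have hxt : ∀ ω : ℕ → N, traj f π x₀ ω t = y (res t ω) :=
      fun ω => (hextres t t ω le_rfl).symm
    have hxt1 : ∀ ω : ℕ → N, traj f π x₀ ω (t+1) = step (y (res t ω), ω t) := by
      intro ω
      show f (traj f π x₀ ω t) (π (traj f π x₀ ω t)) (ω t) = _
      rw [hxt ω]
    set Φ : N × (Fin t → N) → ℝ :=
      (Prod.snd ⁻¹' C).indicator (fun z => V (step (y z.2, z.1))) with hΦ_def
    have hΦ_meas : Measurable Φ :=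
      ((hVcont.measurable).comp (hstepMeas.comp
        ((hy_meas.comp measurable_snd).prodMk measurable_fst))).indicator
        (measurable_snd hC_meas)
    have hΦ_abs : ∀ z, |Φ z| ≤ M := by
      intro z
      rw [hΦ_def]
      by_cases h : z ∈ Prod.snd ⁻¹' C
      · simpa [Set.indicator_of_mem h] using hMabs _
      · simp only [Set.indicator_of_notMem h, abs_zero]
        exact le_trans (abs_nonneg _) (hMabs x₀)
    have hΦ_int : Integrable Φ (d.prod π_t) := integrable_of_bounded_meas hΦ_meas hΦ_abs
    set e : (Fin (t+1) → N) ≃ᵐ N × (Fin t → N) :=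
      MeasurableEquiv.piFinSuccAbove (fun _ : Fin (t+1) => ↥N) (Fin.last t) with he_def
    have hcomp : ∀ ω : ℕ → N, e (res (t+1) ω) = (ω t, res t ω) := by
      intro ω
      refine Prod.ext ?_ ?_
      · show (res (t+1) ω) (Fin.last t) = ω t
        simp [hres_def]
      · funext j
        show (res (t+1) ω) ((Fin.last t).succAbove j) = ω j
        simp [hres_def, Fin.succAbove_last]
    have hL1 : ∫ ω, (B (t+1)).indicator (fun ω' => V (traj f π x₀ ω' (t+1))) ω ∂μ
        = ∫ z, Φ z ∂(d.prod π_t) := by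
      have hfun : ∀ ω, (B (t+1)).indicator (fun ω' => V (traj f π x₀ ω' (t+1))) ω
          = Φ (e (res (t+1) ω)) := by
        intro ω
        rw [hcomp ω]
        by_cases h : ω ∈ B (t+1)
        · simp only [Set.indicator_of_mem h, hΦ_def,
            Set.indicator_of_mem (show ((ω t, res t ω) : N × (Fin t → N)) ∈ Prod.snd ⁻¹' C
              from (hBC ω).1 h)]
          rw [hxt1 ω]
        · simp only [Set.indicator_of_notMem h, hΦ_def,
            Set.indicator_of_notMem (show ((ω t, res t ω) : N × (Fin t → N)) ∉ Prod.snd ⁻¹' C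
              from fun hc => h ((hBC ω).2 hc))]
      rw [funext hfun]
      have h1 : ∫ ω, Φ (e (res (t+1) ω)) ∂μ = ∫ w, Φ (e w) ∂(Measure.map (res (t+1)) μ) :=
        (integral_map (hres_meas (t+1)).aemeasurable
          (hΦ_meas.comp e.measurable).aestronglyMeasurable).symm
      rw [h1, hmap (t+1)]
      exact (measurePreserving_piFinSuccAbove (fun _ : Fin (t+1) => d)
        (Fin.last t)).integral_comp e.measurableEmbedding Φ
    have hL2 : ∫ z, Φ z ∂(d.prod π_t) = ∫ v, ∫ w, Φ (w, v) ∂d ∂π_t :=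
      integral_prod_symm Φ hΦ_int
    have hinner : ∀ v, (∫ w, Φ (w, v) ∂d)
        = C.indicator (fun v' => ∫ w, V (step (y v', w)) ∂d) v := by
      intro v
      by_cases h : v ∈ C
      · have h2 : ∀ w : N, Φ (w, v) = V (step (y v, w)) := by
          intro w
          rw [hΦ_def]
          exact Set.indicator_of_mem (show ((w, v) : N × (Fin t → N)) ∈ Prod.snd ⁻¹' C from h) _
        rw [Set.indicator_of_mem h]
        exact integral_congr_ae (Filter.Eventually.of_forall h2)
      · have h2 : ∀ w : N, Φ (w, v) = 0 := by
          intro w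
          rw [hΦ_def]
          exact Set.indicator_of_notMem
            (show ((w, v) : N × (Fin t → N)) ∉ Prod.snd ⁻¹' C from h) _
        rw [Set.indicator_of_notMem h]
        simp [h2]
    have hpoint : ∀ v, C.indicator (fun v' => ∫ w, V (step (y v', w)) ∂d) v
        ≤ C.indicator (fun v' => V (y v') - ε) v := by
      intro v
      by_cases h : v ∈ C
      · rw [Set.indicator_of_mem h, Set.indicator_of_mem h]
        have hyv : ((y v : X) : L1 n) ∉ Xs := h t (Nat.lt_succ_self t)
        exact hdec (y v) hyv
      · rw [Set.indicator_of_notMem h, Set.indicator_of_notMem h]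
    have hnn : ∀ v, (0:ℝ) ≤ C.indicator (fun v' => ∫ w, V (step (y v', w)) ∂d) v := fun v =>
      Set.indicator_nonneg (fun v' _ => integral_nonneg fun w => hVnonneg _) v
    have hint1 : Integrable (C.indicator (fun v => V (y v))) π_t := by
      refine integrable_of_bounded_meas
        ((hVcont.measurable.comp hy_meas).indicator hC_meas) (M := M) ?_
      intro v
      by_cases h : v ∈ C
      · simpa [Set.indicator_of_mem h] using hMabs _
      · simp only [Set.indicator_of_notMem h, abs_zero]
        exact le_trans (abs_nonneg _) (hMabs x₀)
    have hint2 : Integrable (C.indicator (fun _ => ε)) π_t :=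
      (integrable_const ε).indicator hC_meas
    have hindsub : C.indicator (fun v => V (y v) - ε)
        = fun v => C.indicator (fun v' => V (y v')) v - C.indicator (fun _ => ε) v := by
      funext v
      by_cases h : v ∈ C <;> simp [h]
    have hint3 : Integrable (C.indicator (fun v => V (y v) - ε)) π_t := by
      rw [hindsub]; exact hint1.sub hint2
    have hmono : ∫ v, ∫ w, Φ (w, v) ∂d ∂π_t
        ≤ ∫ v, C.indicator (fun v' => V (y v') - ε) v ∂π_t := by
      apply integral_mono_of_nonneg (Filter.Eventually.of_forall fun v => ?_) hint3
        (Filter.Eventually.of_forall fun v => ?_)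
      · rw [hinner v]; exact hnn v
      · rw [hinner v]; exact hpoint v
    have hsplit : ∫ v, C.indicator (fun v' => V (y v') - ε) v ∂π_t
        = ∫ v, C.indicator (fun v' => V (y v')) v ∂π_t - ε * (π_t C).toReal := by
      rw [hindsub, integral_sub hint1 hint2, integral_indicator_const ε hC_meas,
        smul_eq_mul, mul_comm]
      rfl
    have hR1 : ∫ v, C.indicator (fun v' => V (y v')) v ∂π_t
        = ∫ ω, (B (t+1)).indicator (fun ω' => V (traj f π x₀ ω' t)) ω ∂μ := by
      rw [hπt_def, ← hmap t, integral_map (hres_meas t).aemeasurable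
        (show Measurable (C.indicator fun v' => V (y v')) from
          (hVcont.measurable.comp hy_meas).indicator hC_meas).aestronglyMeasurable]
      apply integral_congr_ae
      refine Filter.Eventually.of_forall fun ω => ?_
      show C.indicator (fun v' => V (y v')) (res t ω)
          = (B (t+1)).indicator (fun ω' => V (traj f π x₀ ω' t)) ω
      by_cases h : ω ∈ B (t+1)
      · rw [Set.indicator_of_mem ((hBC ω).1 h), Set.indicator_of_mem h, hxt ω]
      · rw [Set.indicator_of_notMem (fun hc => h ((hBC ω).2 hc)), Set.indicator_of_notMem h]
    have hμC : (π_t C).toReal = (μ (B (t+1))).toReal := by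
      rw [hπt_def, ← hmap t, Measure.map_apply (hres_meas t) hC_meas]
      have hpre : res t ⁻¹' C = B (t+1) := by
        ext ω
        exact (hBC ω).symm
      rw [hpre]
    calc ∫ ω, (B (t+1)).indicator (fun ω' => V (traj f π x₀ ω' (t+1))) ω ∂μ
        = ∫ v, ∫ w, Φ (w, v) ∂d ∂π_t := by rw [hL1, hL2]
      _ ≤ ∫ v, C.indicator (fun v' => V (y v') - ε) v ∂π_t := hmono
      _ = ∫ v, C.indicator (fun v' => V (y v')) v ∂π_t - ε * (π_t C).toReal := hsplit
      _ = ∫ ω, (B (t+1)).indicator (fun ω' => V (traj f π x₀ ω' t)) ω ∂μ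
          - ε * (μ (B (t+1))).toReal := by rw [hR1, hμC]
  -- shrinking the indicator set
  have hImono : ∀ t, ∫ ω, (B (t+1)).indicator (fun ω' => V (traj f π x₀ ω' t)) ω ∂μ
      ≤ ∫ ω, (B t).indicator (fun ω' => V (traj f π x₀ ω' t)) ω ∂μ := by
    intro t
    apply integral_mono (hInd_int t _ (hB_meas (t+1))) (hInd_int t _ (hB_meas t))
    intro ω
    exact Set.indicator_le_indicator_of_subset (hB_anti t) (fun ω' => hVnonneg _) ω
  have hInonneg : ∀ t, 0 ≤ ∫ ω, (B t).indicator (fun ω' => V (traj f π x₀ ω' t)) ω ∂μ :=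
    fun t => integral_nonneg fun ω => Set.indicator_nonneg (fun ω' _ => hVnonneg _) ω
  have hI0 : ∫ ω, (B 0).indicator (fun ω' => V (traj f π x₀ ω' 0)) ω ∂μ = V x₀ := by
    have hB0 : B 0 = Set.univ := by
      ext ω; simp [hB_def]
    rw [hB0, Set.indicator_univ]
    have : (fun ω' : ℕ → N => V (traj f π x₀ ω' 0)) = fun _ => V x₀ := rfl
    rw [this, integral_const, probReal_univ, one_smul]
  -- main inductive bound
  have bound : ∀ t : ℕ, ε * t * (μ (B t)).toReal
      + ∫ ω, (B t).indicator (fun ω' => V (traj f π x₀ ω' t)) ω ∂μ ≤ V x₀ := by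
    intro t
    induction t with
    | zero => simp [hI0]
    | succ t ih =>
      have hc : (μ (B (t+1))).toReal ≤ (μ (B t)).toReal :=
        ENNReal.toReal_mono (measure_ne_top μ _) (measure_mono (hB_anti t))
      have hcnn : (0:ℝ) ≤ (μ (B (t+1))).toReal := ENNReal.toReal_nonneg
      have htnn : (0:ℝ) ≤ (t : ℝ) := Nat.cast_nonneg t
      have h1 := key t
      have h2 := hImono t
      have hcast : ((t+1 : ℕ) : ℝ) = (t : ℝ) + 1 := by push_cast; ring
      rw [hcast]
      nlinarith [mul_nonneg (mul_nonneg hε.le htnn)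
        (sub_nonneg.mpr hc)]
  have hμBt : ∀ t : ℕ, ε * t * (μ (B t)).toReal ≤ V x₀ := fun t =>
    le_trans (by linarith [hInonneg t]) (bound t)
  -- the intersection has measure zero
  have hBinf_zero : μ (⋂ t, B t) = 0 := by
    have hc_le : ∀ t : ℕ, ε * t * (μ (⋂ t', B t')).toReal ≤ V x₀ := by
      intro t
      have h1 : (μ (⋂ t', B t')).toReal ≤ (μ (B t)).toReal :=
        ENNReal.toReal_mono (measure_ne_top μ _) (measure_mono (Set.iInter_subset _ t))
      have h2 : (0:ℝ) ≤ ε * t := mul_nonneg hε.le (Nat.cast_nonneg t)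
      calc ε * t * (μ (⋂ t', B t')).toReal ≤ ε * t * (μ (B t)).toReal :=
            mul_le_mul_of_nonneg_left h1 h2
        _ ≤ V x₀ := hμBt t
    have hc0 : (μ (⋂ t', B t')).toReal = 0 := by
      by_contra h
      have hcpos : 0 < (μ (⋂ t', B t')).toReal :=
        lt_of_le_of_ne ENNReal.toReal_nonneg (Ne.symm h)
      obtain ⟨t, ht⟩ := exists_nat_gt (V x₀ / (ε * (μ (⋂ t', B t')).toReal))
      have h1 := hc_le t
      have h2 := (div_lt_iff₀ (by positivity : (0:ℝ) < ε * (μ (⋂ t', B t')).toReal)).mp ht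
      nlinarith
    rcases (ENNReal.toReal_eq_zero_iff _).mp hc0 with h | h
    · exact h
    · exact absurd h (measure_ne_top μ _)
  -- conclusion
  have hae : ∀ᵐ ω ∂μ, ω ∉ ⋂ t, B t := measure_eq_zero_iff_ae_notMem.mp hBinf_zero
  filter_upwards [hae] with ω hω
  obtain ⟨t, ht⟩ : ∃ t, ω ∉ B t := by simpa [Set.mem_iInter] using hω
  obtain ⟨s, hst, hs⟩ : ∃ s, s < t ∧ ((traj f π x₀ ω s : X) : L1 n) ∈ Xs := by
    by_contra h
    push_neg at h
    exact ht fun s hs => h s hs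
  have stay : ∀ k, ((traj f π x₀ ω (s + k) : X) : L1 n) ∈ Xs := by
    intro k
    induction k with
    | zero => simpa using hs
    | succ k ih => exact hclosed _ _ ih
  have hzero : ∀ k, s ≤ k → Metric.infDist ((traj f π x₀ ω k : X) : L1 n) Xs = 0 := by
    intro k hk
    obtain ⟨j, rfl⟩ := Nat.exists_eq_add_of_le hk
    exact Metric.infDist_zero_of_mem (stay j)
  refine Tendsto.congr' ?_ tendsto_const_nhds
  exact eventually_atTop.mpr ⟨s, fun k hk => (hzero k hk).symm⟩
end

section
/- Let X ⊆ ℝⁿ be compact, f : X × U × N → X be L_f-Lipschitz in (x, u) (with respect to the ℓ¹ norm on the product, uniformly in ω), π : X → U be L_π-Lipschitz, V : X → ℝ be nonnegative, continuous, and L_V-Lipschitz, and d a probability distribution on N. Let X_s ⊆ X, let τ > 0, and let X̃ ⊆ X be a finite discretization of X \ X_s with mesh τ, i.e. for every x ∈ X \ X_s there exists x̃ ∈ X̃ with ‖x − x̃‖₁ < τ. Set K = L_V · (L_f · (L_π + 1) + 1). If for every x̃ ∈ X̃ the strict inequality E_{ω∼d}[V(f(x̃, π(x̃), ω))] < V(x̃)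 − τ·K holds, then there exists ε > 0 such that for every x ∈ X \ X_s, E_{ω∼d}[V(f(x, π(x), ω))] ≤ V(x) − ε; that is, V is a ranking supermartingale for X_s. -/
open MeasureTheory Filter

/-- Soundness of the discretization-based verifier: if the strict expected
decrease condition `E[V(f(x̃,π(x̃),ω))] < V(x̃) − τ·K` with `K = L_V·(L_f·(L_π+1)+1)` holds on a
finite discretization `X̃` of `X \ X_s` with mesh `τ`, then `V` is a ranking supermartingale
for `X_s`. -/
theorem rsm_of_discretized_strict_decrease
    {n m p : ℕ} (X : Set (L1 n)) (U : Set (L1 m)) (N : Set (L1 p))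
    (hX : IsCompact X)
    (f : X → U → N → X) (π : X → U) (V : X → ℝ)
    (Lf Lπ LV : NNReal)
    -- `f` is `L_f`-Lipschitz in `(x,u)` (ℓ¹ norm on the product), uniformly in `ω`:
    (hf : ∀ (ω : N) (x x' : X) (u u' : U),
      dist (f x u ω) (f x' u' ω) ≤ Lf * (dist x x' + dist u u'))
    -- `π` is `L_π`-Lipschitz:
    (hπ : ∀ x x' : X, dist (π x) (π x') ≤ Lπ * dist x x')
    -- `V` is nonnegative, continuous and `L_V`-Lipschitz:
    (hVnonneg : ∀ x, 0 ≤ V x) (hVcont : Continuous V)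
    (hV : ∀ x x' : X, dist (V x) (V x') ≤ LV * dist x x')
    -- `d` is a probability distribution on `N` (and the expectations are well defined):
    (d : Measure N) [IsProbabilityMeasure d]
    (hmeas : ∀ x : X, Measurable fun ω : N => V (f x (π x) ω))
    (Xs : Set (L1 n))
    -- `X̃ ⊆ X` is a finite discretization of `X \ X_s` with mesh `τ`:
    (τ : ℝ) (hτ : 0 < τ)
    (Xtil : Set X) (hXtilFin : Xtil.Finite)
    (hmesh : ∀ x : X, (x : L1 n) ∉ Xs → ∃ xt ∈ Xtil, dist x xt < τ)
    -- the strict decrease condition holds at every discretization point: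
    (hstrict : ∀ xt ∈ Xtil,
      ∫ ω, V (f xt (π xt) ω) ∂d < V xt - τ * (LV * (Lf * (Lπ + 1) + 1))) :
    -- then `V` is a ranking supermartingale for `X_s`:
    ∃ ε > (0 : ℝ), ∀ x : X, (x : L1 n) ∉ Xs →
      ∫ ω, V (f x (π x) ω) ∂d ≤ V x - ε := by
  classical
  -- boundedness of V
  haveI : CompactSpace X := isCompact_iff_compactSpace.mp hX
  obtain ⟨M, hM⟩ := (isBounded_iff_forall_norm_le.mp
    (isCompact_range hVcont).isBounded : ∃ C, ∀ y ∈ Set.range V, ‖y‖ ≤ C)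
  have hint : ∀ x : X, Integrable (fun ω => V (f x (π x) ω)) d := by
    intro x
    refine (integrable_const M).mono' (hmeas x).aestronglyMeasurable ?_
    exact Filter.Eventually.of_forall fun ω => hM _ ⟨_, rfl⟩
  set C : ℝ := (LV : ℝ) * (Lf * (Lπ + 1)) with hC
  have hCnn : 0 ≤ C := by positivity
  have hLVnn : (0:ℝ) ≤ LV := LV.coe_nonneg
  -- pointwise Lipschitz bound
  have hpt : ∀ (x x' : X) (ω : N),
      V (f x (π x) ω) ≤ V (f x' (π x') ω) + C * dist x x' := by
    intro x x' ω
    have h1 := hV (f x (π x) ω) (f x' (π x') ω)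
    have h2 := hf ω x x' (π x) (π x')
    have h3 := hπ x x'
    have habs : |V (f x (π x) ω) - V (f x' (π x') ω)| ≤
        (LV : ℝ) * dist (f x (π x) ω) (f x' (π x') ω) := by
      simpa [Real.dist_eq] using h1
    have hd : (LV : ℝ) * dist (f x (π x) ω) (f x' (π x') ω) ≤ C * dist x x' := by
      have hdx : (0:ℝ) ≤ dist x x' := dist_nonneg
      have h4 : dist (f x (π x) ω) (f x' (π x') ω) ≤
          (Lf : ℝ) * (dist x x' + (Lπ : ℝ) * dist x x') := by
        refine h2.trans ?_
        have := mul_le_mul_of_nonneg_left h3 (Lf.coe_nonneg)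
        nlinarith [Lf.coe_nonneg]
      have := mul_le_mul_of_nonneg_left h4 hLVnn
      nlinarith
    have := (abs_le.mp (habs.trans hd)).1
    linarith [(abs_le.mp (habs.trans hd)).2]
  -- case split on whether X \ Xs is empty
  by_cases hne : ∃ x : X, (x : L1 n) ∉ Xs
  · obtain ⟨x₀, hx₀⟩ := hne
    obtain ⟨xt₀, hxt₀, _⟩ := hmesh x₀ hx₀
    set s : Finset X := hXtilFin.toFinset with hs
    have hsne : s.Nonempty := ⟨xt₀, hXtilFin.mem_toFinset.mpr hxt₀⟩
    set g : X → ℝ := fun xt => V xt - τ * (LV * (Lf * (Lπ + 1) + 1)) -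
      ∫ ω, V (f xt (π xt) ω) ∂d with hg
    refine ⟨s.inf' hsne g, ?_, ?_⟩
    · rw [gt_iff_lt, Finset.lt_inf'_iff]
      intro xt hxt
      have := hstrict xt (hXtilFin.mem_toFinset.mp hxt)
      simp only [hg]
      linarith
    · intro x hx
      obtain ⟨xt, hxt, hdist⟩ := hmesh x hx
      have hεle : s.inf' hsne g ≤ g xt :=
        Finset.inf'_le g (hXtilFin.mem_toFinset.mpr hxt)
      have hdx : (0:ℝ) ≤ dist x xt := dist_nonneg
      -- integral comparison
      have hI : ∫ ω, V (f x (π x) ω) ∂d ≤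
          (∫ ω, V (f xt (π xt) ω) ∂d) + C * dist x xt := by
        have := integral_mono (hint x) ((hint xt).add (integrable_const (C * dist x xt)))
          (fun ω => hpt x xt ω)
        simpa [integral_add (hint xt) (integrable_const _)] using this
      have hVx : V xt ≤ V x + (LV : ℝ) * dist x xt := by
        have := (abs_le.mp (by simpa [Real.dist_eq] using hV x xt)).1
        have hd := hV x xt
        rw [Real.dist_eq] at hd
        have := (abs_le.mp hd).1
        linarith
      have hgap : ∫ ω, V (f xt (π xt) ω) ∂d ≤
          V xt - τ * (LV * (Lf * (Lπ + 1) + 1)) - g xt := by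
        simp [hg]
      have hKey : τ * (LV * (Lf * (Lπ + 1) + 1)) = τ * C + τ * LV := by
        simp [hC]; ring
      have hmul : C * dist x xt ≤ C * τ := mul_le_mul_of_nonneg_left hdist.le hCnn
      have hmul2 : (LV:ℝ) * dist x xt ≤ LV * τ := mul_le_mul_of_nonneg_left hdist.le hLVnn
      have := hεle
      nlinarith [hgap, hI, hVx]
  · push_neg at hne
    exact ⟨1, one_pos, fun x hx => absurd (hne x) hx⟩
end

section
/- Let f : X × U × N → X be L_f-Lipschitz in (x, u) with respect to the ℓ¹ norm on the product (uniformly in ω), π : X → U be L_π-Lipschitz, V : X → ℝ be L_V-Lipschitz and bounded with ω ↦ V(f(x, π(x), ω)) measurable for each x, and d a probability distribution on N. Set K = L_V · (L_f · (L_π + 1) + 1). Then for all x, x̃ ∈ X with ‖x − x̃‖₁ ≤ τ, E_{ω∼d}[V(f(x, π(x), ω))] − V(x) ≤ E_{ω∼d}[V(f(x̃, π(x̃), ω))] − V(x̃) + τ·K. In particular, if E_{ω∼d}[V(f(x̃, π(x̃), ω))] < V(x̃) − τ·K, then E_{ω∼d}[V(f(x, π(x), ω))] < V(x). -/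
open MeasureTheory Filter

/-- With `K = L_V·(L_f·(L_π+1)+1)`, for all `x, x̃ ∈ X` with `‖x−x̃‖₁ ≤ τ`,
`E[V(f(x,π(x),ω))] − V(x) ≤ E[V(f(x̃,π(x̃),ω))] − V(x̃) + τ·K`; in particular, if
`E[V(f(x̃,π(x̃),ω))] < V(x̃) − τ·K` then `E[V(f(x,π(x),ω))] < V(x)`. -/
theorem expected_decrease_transfer
    {n m p : ℕ} (X : Set (L1 n)) (U : Set (L1 m)) (N : Set (L1 p))
    (hXmeas : MeasurableSet X) (hUmeas : MeasurableSet U) (hNmeas : MeasurableSet N)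
    (f : X → U → N → X) (π : X → U) (V : X → ℝ)
    (Lf Lπ LV : NNReal)
    (hf : ∀ (ω : N) (x x' : X) (u u' : U),
      dist (f x u ω) (f x' u' ω) ≤ Lf * (dist x x' + dist u u'))
    (hπ : ∀ x x' : X, dist (π x) (π x') ≤ Lπ * dist x x')
    (hV : ∀ x x' : X, dist (V x) (V x') ≤ LV * dist x x')
    (hVbdd : ∃ C : ℝ, ∀ x : X, |V x| ≤ C)
    (hmeas : ∀ x : X, Measurable fun ω : N => V (f x (π x) ω))
    (d : Measure N) [IsProbabilityMeasure d]
    (τ : ℝ) :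
    (∀ x xt : X, dist x xt ≤ τ →
      (∫ ω, V (f x (π x) ω) ∂d) - V x ≤
        (∫ ω, V (f xt (π xt) ω) ∂d) - V xt + τ * (LV * (Lf * (Lπ + 1) + 1))) ∧
    (∀ x xt : X, dist x xt ≤ τ →
      (∫ ω, V (f xt (π xt) ω) ∂d) < V xt - τ * (LV * (Lf * (Lπ + 1) + 1)) →
      (∫ ω, V (f x (π x) ω) ∂d) < V x) := by
  obtain ⟨C, hC⟩ := hVbdd
  have hint : ∀ x : X, Integrable (fun ω : N => V (f x (π x) ω)) d := by
    intro x
    refine ⟨(hmeas x).aestronglyMeasurable, ?_⟩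
    exact HasFiniteIntegral.of_bounded (C := C)
      (Filter.Eventually.of_forall fun ω => by simpa using hC _)
  have main : ∀ x xt : X, dist x xt ≤ τ →
      (∫ ω, V (f x (π x) ω) ∂d) - V x ≤
        (∫ ω, V (f xt (π xt) ω) ∂d) - V xt + τ * (LV * (Lf * (Lπ + 1) + 1)) := by
    intro x xt hτ
    have hτ0 : (0:ℝ) ≤ τ := le_trans dist_nonneg hτ
    have key : ∀ ω : N, V (f x (π x) ω) - V (f xt (π xt) ω) ≤
        τ * (LV * (Lf * (Lπ + 1))) := by
      intro ω
      have h1 : V (f x (π x) ω) - V (f xt (π xt) ω) ≤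
          LV * dist (f x (π x) ω) (f xt (π xt) ω) := by
        have := hV (f x (π x) ω) (f xt (π xt) ω)
        rw [Real.dist_eq] at this
        exact le_trans (le_abs_self _) this
      have h2 : dist (f x (π x) ω) (f xt (π xt) ω) ≤ Lf * (dist x xt + Lπ * dist x xt) := by
        refine le_trans (hf ω x xt (π x) (π xt)) ?_
        gcongr
        exact hπ x xt
      have h3 : (Lf : ℝ) * (dist x xt + Lπ * dist x xt) ≤ Lf * (τ + Lπ * τ) := by
        gcongr <;> exact hτ
      calc V (f x (π x) ω) - V (f xt (π xt) ω)
          ≤ LV * (Lf * (τ + Lπ * τ)) := by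
            refine le_trans h1 ?_
            gcongr
            exact le_trans h2 h3
        _ = τ * (LV * (Lf * (Lπ + 1))) := by ring
    have hInt : (∫ ω, V (f x (π x) ω) ∂d) - (∫ ω, V (f xt (π xt) ω) ∂d) ≤
        τ * (LV * (Lf * (Lπ + 1))) := by
      rw [← integral_sub (hint x) (hint xt)]
      calc (∫ ω, (V (f x (π x) ω) - V (f xt (π xt) ω)) ∂d)
          ≤ ∫ _ω, τ * (LV * (Lf * (Lπ + 1))) ∂d :=
            integral_mono ((hint x).sub (hint xt)) (integrable_const _) key
        _ = τ * (LV * (Lf * (Lπ + 1))) := by simp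
    have hVx : V xt - V x ≤ LV * τ := by
      have := hV xt x
      rw [Real.dist_eq] at this
      have h := le_trans (le_abs_self _) this
      have : (LV : ℝ) * dist xt x ≤ LV * τ := by
        rw [dist_comm]; gcongr
      linarith
    nlinarith [hInt, hVx]
  refine ⟨main, fun x xt hτ hlt => ?_⟩
  have := main x xt hτ
  linarith
end

section
/- Let X ⊆ ℝⁿ be compact, f : X × U × N → X Borel measurable, π : X → U Borel measurable, d a probability distribution on N, and X_s ⊆ X Borel measurable, nonempty, and closed under the system dynamics (for every x ∈ X_s and every ω ∈ N, f(x, π(x), ω) ∈ X_s). Suppose V : X → ℝ is nonnegative, continuous, and there exists ε > 0 such that for every x ∈ X \ X_s, E_{ω∼d}[V(f(x, π(x), ω))] ≤ V(x) − ε. Then for every initial state x₀ ∈ X, for d^ℕ-almost every noise sequence ω ∈ N^ℕ, the trajectory x_{t+1} = f(x_t, π(x_t), ω_t) reaches X_s in finite time: there exists t with x_t ∈ X_s. -/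
open MeasureTheory Filter

/-! ### Auxiliary material -/

noncomputable def consN {N : Type*} (p : N × (ℕ → N)) : ℕ → N :=
  fun i => Nat.casesOn i p.1 p.2

lemma consN_measurable {N : Type*} [MeasurableSpace N] :
    Measurable (consN (N := N)) := by
  apply measurable_pi_lambda
  intro i
  cases i with
  | zero => exact measurable_fst
  | succ k => exact (measurable_pi_apply k).comp measurable_snd

lemma cyl_meas {N : Type*} [MeasurableSpace N] (s : Finset ℕ) (B : ℕ → Set N)
    (hB : ∀ i, MeasurableSet (B i)) :
    MeasurableSet {ω : ℕ → N | ∀ i ∈ s, ω i ∈ B i} := by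
  have : {ω : ℕ → N | ∀ i ∈ s, ω i ∈ B i} = ⋂ i ∈ s, (fun ω => ω i) ⁻¹' (B i) := by
    ext ω; simp
  rw [this]
  exact MeasurableSet.biInter s.countable_toSet
    (fun i _ => (measurable_pi_apply i) (hB i))

lemma mu_eq_map_cons {N : Type*} [MeasurableSpace N]
    (d : Measure N) [IsProbabilityMeasure d]
    (μ : Measure (ℕ → N)) [IsProbabilityMeasure μ]
    (hμ : ∀ (s : Finset ℕ) (B : ℕ → Set N), (∀ i, MeasurableSet (B i)) →
      μ {ω | ∀ i ∈ s, ω i ∈ B i} = ∏ i ∈ s, d (B i)) :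
    μ = Measure.map consN (d.prod μ) := by
  classical
  set C : Set (Set (ℕ → N)) :=
    {S | ∃ (s : Finset ℕ) (B : ℕ → Set N), (∀ i, MeasurableSet (B i)) ∧
      S = {ω | ∀ i ∈ s, ω i ∈ B i}} with hC
  have hPi : IsPiSystem C := by
    rintro S₁ ⟨s₁, B₁, hB₁, rfl⟩ S₂ ⟨s₂, B₂, hB₂, rfl⟩ -
    refine ⟨s₁ ∪ s₂, fun i => (if i ∈ s₁ then B₁ i else Set.univ) ∩
      (if i ∈ s₂ then B₂ i else Set.univ), ?_, ?_⟩
    · intro i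
      refine MeasurableSet.inter ?_ ?_ <;> split_ifs <;>
        first | exact hB₁ _ | exact hB₂ _ | exact MeasurableSet.univ
    · ext ω
      simp only [Set.mem_inter_iff, Set.mem_setOf_eq, Finset.mem_union]
      constructor
      · rintro ⟨h1, h2⟩ i hi
        constructor <;> split_ifs with h <;> simp [h1 i, h2 i, h]
      · intro h
        constructor <;> intro i hi
        · have := (h i (Or.inl hi)).1; simpa [hi] using this
        · have := (h i (Or.inr hi)).2; simpa [hi] using this
  have hgen : (MeasurableSpace.pi : MeasurableSpace (ℕ → N)) =
      MeasurableSpace.generateFrom C := by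
    apply le_antisymm
    · rw [MeasurableSpace.pi_eq_generateFrom_projections]
      apply MeasurableSpace.generateFrom_le
      rintro _ ⟨i, B, hB, rfl⟩
      apply MeasurableSpace.measurableSet_generateFrom
      exact ⟨{i}, fun _ => B, fun _ => hB, by ext ω; simp⟩
    · apply MeasurableSpace.generateFrom_le
      rintro _ ⟨s, B, hB, rfl⟩
      exact cyl_meas s B hB
  refine MeasureTheory.ext_of_generate_finite C hgen hPi ?_ ?_
  swap
  · rw [Measure.map_apply consN_measurable MeasurableSet.univ]
    simp
  rintro _ ⟨s, B, hB, rfl⟩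
  rw [hμ s B hB, Measure.map_apply consN_measurable (cyl_meas s B hB)]
  have hpre : consN ⁻¹' {ω : ℕ → N | ∀ i ∈ s, ω i ∈ B i} =
      (if 0 ∈ s then B 0 else Set.univ) ×ˢ
        {ω' : ℕ → N | ∀ j ∈ Finset.image Nat.pred (s.erase 0), ω' j ∈ B (j + 1)} := by
    ext ⟨a, ω'⟩
    simp only [Set.mem_preimage, Set.mem_setOf_eq, Set.mem_prod, consN]
    constructor
    · intro h
      refine ⟨?_, ?_⟩
      · split_ifs with h0
        · exact h 0 h0
        · trivial
      · intro j hj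
        simp only [Finset.mem_image, Finset.mem_erase] at hj
        obtain ⟨k, ⟨hk0, hks⟩, rfl⟩ := hj
        obtain ⟨k', rfl⟩ := Nat.exists_eq_succ_of_ne_zero hk0
        simpa using h _ hks
    · rintro ⟨h0, hrest⟩ i hi
      cases i with
      | zero => simpa [hi] using h0
      | succ k =>
        have : k ∈ Finset.image Nat.pred (s.erase 0) := by
          simp only [Finset.mem_image, Finset.mem_erase]
          exact ⟨k + 1, ⟨Nat.succ_ne_zero k, hi⟩, rfl⟩
        simpa using hrest k this
  rw [hpre, Measure.prod_prod,
    hμ (Finset.image Nat.pred (s.erase 0)) (fun j => B (j+1)) (fun j => hB (j+1))]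
  have hinj : Set.InjOn Nat.pred (s.erase 0 : Finset ℕ) := by
    intro x hx y hy h
    simp only [Finset.coe_erase, Set.mem_diff, Finset.mem_coe, Set.mem_singleton_iff] at hx hy
    simp only [Nat.pred_eq_sub_one] at h
    omega
  rw [Finset.prod_image hinj]
  have herase : ∏ x ∈ s.erase 0, d (B (x.pred + 1)) = ∏ x ∈ s.erase 0, d (B x) := by
    apply Finset.prod_congr rfl
    intro i hi
    have hi0 : i ≠ 0 := (Finset.mem_erase.mp hi).1
    have h1 : i.pred + 1 = i := by rw [Nat.pred_eq_sub_one]; omega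
    rw [h1]
  rw [herase]
  by_cases h0 : 0 ∈ s
  · rw [if_pos h0, ← Finset.mul_prod_erase s _ h0]
  · rw [if_neg h0, measure_univ, one_mul, Finset.erase_eq_of_notMem h0]

open Classical in
noncomputable def Wfun {X N : Type*} [MeasurableSpace N] (g : X → N → X) (Xs' : Set X)
    (d : Measure N) (V : X → ℝ) : ℕ → X → ℝ
  | 0 => fun x => if x ∈ Xs' then 0 else V x
  | t+1 => fun x => if x ∈ Xs' then 0 else ∫ a, Wfun g Xs' d V t (g x a) ∂d

section aux
variable {X N : Type*} [MeasurableSpace X] [MeasurableSpace N]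

lemma integrable_of_bd (g : X → N → X) (d : Measure N) [IsProbabilityMeasure d]
    (hg : Measurable fun q : X × N => g q.1 q.2)
    {F : X → ℝ} (hF : Measurable F) (c : ℝ)
    (h0 : ∀ y, 0 ≤ F y) (hc : ∀ y, F y ≤ c) (x : X) :
    Integrable (fun a => F (g x a)) d := by
  refine ⟨(hF.comp (hg.comp (measurable_prodMk_left))).aestronglyMeasurable, ?_⟩
  apply HasFiniteIntegral.of_bounded (C := c)
  filter_upwards with a
  rw [Real.norm_eq_abs, abs_of_nonneg (h0 _)]
  exact hc _

lemma Wfun_props (g : X → N → X) (Xs' : Set X) (d : Measure N) [IsProbabilityMeasure d]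
    (hg : Measurable fun q : X × N => g q.1 q.2) (hXs' : MeasurableSet Xs')
    (V : X → ℝ) (hV : Measurable V) (c : ℝ) (h0 : ∀ x, 0 ≤ V x)
    (hc : ∀ x, V x ≤ c) (hc0 : 0 ≤ c) :
    ∀ t, Measurable (Wfun g Xs' d V t) ∧
      ∀ x, 0 ≤ Wfun g Xs' d V t x ∧ Wfun g Xs' d V t x ≤ c := by
  intro t
  induction t with
  | zero =>
    refine ⟨Measurable.ite hXs' measurable_const hV, fun x => ?_⟩
    by_cases hx : x ∈ Xs' <;> simp [Wfun, hx, h0 x, hc x, hc0]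
  | succ t ih =>
    obtain ⟨ihm, ihb⟩ := ih
    have hint : ∀ x, Integrable (fun a => Wfun g Xs' d V t (g x a)) d :=
      integrable_of_bd g d hg ihm c (fun y => (ihb y).1) (fun y => (ihb y).2)
    constructor
    · refine Measurable.ite hXs' measurable_const ?_
      have : StronglyMeasurable fun q : X × N => Wfun g Xs' d V t (g q.1 q.2) :=
        (ihm.comp hg).stronglyMeasurable
      exact this.integral_prod_right'.measurable
    · intro x
      by_cases hx : x ∈ Xs'
      · simp [Wfun, hx, hc0]
      · simp only [Wfun, if_neg hx]
        constructor
        · exact integral_nonneg fun a => (ihb _).1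
        · calc ∫ a, Wfun g Xs' d V t (g x a) ∂d ≤ ∫ _, c ∂d :=
                integral_mono (hint x) (integrable_const c) fun a => (ihb _).2
            _ = c := by simp

lemma Wfun_dec (g : X → N → X) (Xs' : Set X) (d : Measure N) [IsProbabilityMeasure d]
    (hg : Measurable fun q : X × N => g q.1 q.2) (hXs' : MeasurableSet Xs')
    (V : X → ℝ) (hV : Measurable V) (c : ℝ) (h0 : ∀ x, 0 ≤ V x)
    (hc : ∀ x, V x ≤ c) (hc0 : 0 ≤ c)
    (ε : ℝ) (hε : 0 < ε)
    (hdec : ∀ x, x ∉ Xs' → ∫ a, V (g x a) ∂d ≤ V x - ε) :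
    ∀ t x, Wfun g Xs' d V (t+1) x ≤
      Wfun g Xs' d V t x - ε * Wfun g Xs' d (fun _ => 1) t x := by
  have hW := Wfun_props g Xs' d hg hXs' V hV c h0 hc hc0
  have hQ := Wfun_props g Xs' d hg hXs' (fun _ => 1) measurable_const 1
    (fun _ => zero_le_one) (fun _ => le_refl 1) zero_le_one
  have hWint : ∀ t x, Integrable (fun a => Wfun g Xs' d V t (g x a)) d := fun t x =>
    integrable_of_bd g d hg (hW t).1 c (fun y => ((hW t).2 y).1) (fun y => ((hW t).2 y).2) x
  have hQint : ∀ t x, Integrable (fun a => Wfun g Xs' d (fun _ => 1) t (g x a)) d := fun t x =>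
    integrable_of_bd g d hg (hQ t).1 1 (fun y => ((hQ t).2 y).1) (fun y => ((hQ t).2 y).2) x
  intro t
  induction t with
  | zero =>
    intro x
    by_cases hx : x ∈ Xs'
    · simp [Wfun, hx]
    · simp only [Wfun, if_neg hx]
      have hle : ∫ a, Wfun g Xs' d V 0 (g x a) ∂d ≤ ∫ a, V (g x a) ∂d := by
        apply integral_mono (hWint 0 x)
          (integrable_of_bd g d hg hV c h0 hc x)
        intro a
        by_cases hy : g x a ∈ Xs' <;> simp [Wfun, hy, h0 _]
      simp only [Wfun] at hle
      have := hdec x hx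
      nlinarith [this, hle]
  | succ t ih =>
    intro x
    by_cases hx : x ∈ Xs'
    · simp [Wfun, hx]
    · simp only [Wfun, if_neg hx]
      calc ∫ a, Wfun g Xs' d V (t+1) (g x a) ∂d
          ≤ ∫ a, (Wfun g Xs' d V t (g x a) -
              ε * Wfun g Xs' d (fun _ => 1) t (g x a)) ∂d := by
            apply integral_mono (hWint (t+1) x)
              ((hWint t x).sub ((hQint t x).const_mul ε))
            intro a
            exact ih (g x a)
        _ = (∫ a, Wfun g Xs' d V t (g x a) ∂d) -
              ε * ∫ a, Wfun g Xs' d (fun _ => 1) t (g x a) ∂d := by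
            rw [integral_sub (hWint t x) ((hQint t x).const_mul ε), integral_const_mul]
end aux

/-- Under a ranking supermartingale for a nonempty set `Xs` that is closed
under the dynamics, from every initial state the trajectory reaches `Xs` in finite time,
for `d^ℕ`-almost every noise sequence. -/
theorem rsm_implies_as_reachability
    {n m p : ℕ} (X : Set (L1 n)) (U : Set (L1 m)) (N : Set (L1 p))
    (hX : IsCompact X)
    (f : X → U → N → X) (π : X → U)
    -- `f` and `π` are Borel measurable:
    (hfmeas : Measurable fun q : X × U × N => f q.1 q.2.1 q.2.2)
    (hπmeas : Measurable π)
    -- `d` is a probability distribution on `N`: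
    (d : Measure N) [IsProbabilityMeasure d]
    -- `μ` is the infinite product measure `d^ℕ` on `N^ℕ`, characterized on cylinders:
    (μ : Measure (ℕ → N)) [IsProbabilityMeasure μ]
    (hμ : ∀ (s : Finset ℕ) (B : ℕ → Set N), (∀ i, MeasurableSet (B i)) →
      μ {ω | ∀ i ∈ s, ω i ∈ B i} = ∏ i ∈ s, d (B i))
    -- `Xs ⊆ X` is Borel measurable, nonempty and closed under the dynamics:
    (Xs : Set (L1 n)) (hXsX : Xs ⊆ X) (hXsMeas : MeasurableSet Xs) (hXsne : Xs.Nonempty)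
    (hclosed : ∀ (x : X) (ω : N), (x : L1 n) ∈ Xs → (f x (π x) ω : L1 n) ∈ Xs)
    -- `V` is a ranking supermartingale for `Xs`:
    (V : X → ℝ) (hVnonneg : ∀ x, 0 ≤ V x) (hVcont : Continuous V)
    (ε : ℝ) (hε : 0 < ε)
    (hdec : ∀ x : X, (x : L1 n) ∉ Xs → ∫ ω, V (f x (π x) ω) ∂d ≤ V x - ε)
    (x₀ : X) :
    ∀ᵐ ω ∂μ, ∃ t : ℕ, ((traj f π x₀ ω t : X) : L1 n) ∈ Xs := by
  classical
  haveI : CompactSpace X := isCompact_iff_compactSpace.mp hX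
  haveI hXne : Nonempty X := ⟨⟨hXsne.choose, hXsX hXsne.choose_spec⟩⟩
  obtain ⟨xm, -, hxm⟩ := isCompact_univ.exists_isMaxOn Set.univ_nonempty
    hVcont.continuousOn
  set M := V xm with hMdef
  have hM : ∀ x, V x ≤ M := fun x => hxm (Set.mem_univ x)
  have hM0 : 0 ≤ M := hVnonneg xm
  set g : X → N → X := fun x a => f x (π x) a with hgdef
  have hgmeas : Measurable fun q : X × N => g q.1 q.2 :=
    hfmeas.comp (measurable_fst.prodMk
      ((hπmeas.comp measurable_fst).prodMk measurable_snd))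
  set Xs' : Set X := {x : X | (x : L1 n) ∈ Xs} with hXs'def
  have hXs'meas : MeasurableSet Xs' := measurable_subtype_coe hXsMeas
  have hVmeas : Measurable V := hVcont.measurable
  have hWp := Wfun_props g Xs' d hgmeas hXs'meas V hVmeas M hVnonneg hM hM0
  have hQp := Wfun_props g Xs' d hgmeas hXs'meas (fun _ => 1) measurable_const 1
    (fun _ => zero_le_one) (fun _ => le_refl 1) zero_le_one
  have hQint : ∀ t x, Integrable (fun a => Wfun g Xs' d (fun _ => 1) t (g x a)) d :=
    fun t x => integrable_of_bd g d hgmeas (hQp t).1 1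
      (fun y => ((hQp t).2 y).1) (fun y => ((hQp t).2 y).2) x
  have hdecW := Wfun_dec g Xs' d hgmeas hXs'meas V hVmeas M hVnonneg hM hM0 ε hε
    (fun x hx => hdec x hx)
  -- summability of the survival probabilities
  have hkey2 : ∀ T, ∑ t ∈ Finset.range T, ε * Wfun g Xs' d (fun _ => 1) t x₀ +
      Wfun g Xs' d V T x₀ ≤ Wfun g Xs' d V 0 x₀ := by
    intro T
    induction T with
    | zero => simp
    | succ T ih =>
      rw [Finset.sum_range_succ]
      have h1 := hdecW T x₀
      linarith
  have hpartial : ∀ T, ∑ t ∈ Finset.range T, ε * Wfun g Xs' d (fun _ => 1) t x₀ ≤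
      Wfun g Xs' d V 0 x₀ := by
    intro T
    have := ((hWp T).2 x₀).1
    linarith [hkey2 T]
  have hsum : Summable fun t => ε * Wfun g Xs' d (fun _ => 1) t x₀ :=
    summable_of_sum_range_le (fun t => mul_nonneg hε.le ((hQp t).2 x₀).1) hpartial
  have hQsum : Summable fun t => Wfun g Xs' d (fun _ => 1) t x₀ := by
    have h2 := hsum.mul_left ε⁻¹
    refine h2.congr fun t => ?_
    rw [inv_mul_cancel_left₀ hε.ne']
  have hQ0 : Tendsto (fun t => Wfun g Xs' d (fun _ => 1) t x₀) atTop (nhds 0) :=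
    hQsum.tendsto_atTop_zero
  -- trajectory measurability
  have htraj : ∀ t, Measurable fun q : X × (ℕ → N) => traj f π q.1 q.2 t := by
    intro t
    induction t with
    | zero => exact measurable_fst
    | succ t ih =>
      exact hfmeas.comp (ih.prodMk ((hπmeas.comp ih).prodMk
        ((measurable_pi_apply t).comp measurable_snd)))
  set St : ℕ → Set (X × (ℕ → N)) :=
    fun t => {q | ∀ s ≤ t, ((traj f π q.1 q.2 s : X) : L1 n) ∉ Xs} with hStdef
  have hStmeas : ∀ t, MeasurableSet (St t) := by
    intro t
    have : St t = ⋂ s ∈ Set.Iic t,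
        {q : X × (ℕ → N) | ((traj f π q.1 q.2 s : X) : L1 n) ∉ Xs} := by
      ext q; simp [hStdef]
    rw [this]
    refine MeasurableSet.biInter (Set.to_countable _) fun s _ => ?_
    exact (measurable_subtype_coe.comp (htraj s)) hXsMeas.compl
  set A : ℕ → X → Set (ℕ → N) :=
    fun t x => {ω | ∀ s ≤ t, ((traj f π x ω s : X) : L1 n) ∉ Xs} with hAdef
  have hAmeas : ∀ t x, MeasurableSet (A t x) := by
    intro t x
    have : A t x = Prod.mk x ⁻¹' St t := rfl
    rw [this]
    exact measurable_prodMk_left (hStmeas t)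
  have hμmap := mu_eq_map_cons d μ hμ
  have hshift : ∀ (x : X) (a : N) (ω' : ℕ → N) (s : ℕ),
      traj f π x (consN (a, ω')) (s+1) = traj f π (g x a) ω' s := by
    intro x a ω' s
    induction s with
    | zero => rfl
    | succ s ih =>
      have h1 : traj f π x (consN (a, ω')) (s+1+1) =
          f (traj f π x (consN (a, ω')) (s+1)) (π (traj f π x (consN (a, ω')) (s+1)))
            (consN (a, ω') (s+1)) := rfl
      rw [h1, ih]
      rfl
  have hkey : ∀ t x, μ (A t x) ≤ ENNReal.ofReal (Wfun g Xs' d (fun _ => 1) t x) := by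
    intro t
    induction t with
    | zero =>
      intro x
      by_cases hx : x ∈ Xs'
      · have hempty : A 0 x = ∅ := by
          ext ω
          simp only [hAdef, Set.mem_setOf_eq, Set.mem_empty_iff_false, iff_false]
          push_neg
          exact ⟨0, le_refl 0, hx⟩
        rw [hempty]
        simp
      · have h1 : Wfun g Xs' d (fun _ => 1) 0 x = 1 := by simp [Wfun, hx]
        rw [h1, ENNReal.ofReal_one]
        exact prob_le_one
    | succ t ih =>
      intro x
      by_cases hx : x ∈ Xs'
      · have hempty : A (t+1) x = ∅ := by
          ext ω
          simp only [hAdef, Set.mem_setOf_eq, Set.mem_empty_iff_false, iff_false]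
          push_neg
          exact ⟨0, by omega, hx⟩
        rw [hempty]
        simp
      · rw [hμmap, Measure.map_apply consN_measurable (hAmeas (t+1) x)]
        have hpre : consN ⁻¹' A (t+1) x =
            (fun q : N × (ℕ → N) => (g x q.1, q.2)) ⁻¹' St t := by
          ext ⟨a, ω'⟩
          simp only [Set.mem_preimage, hAdef, hStdef, Set.mem_setOf_eq]
          constructor
          · intro h s hs
            have := h (s+1) (by omega)
            rwa [hshift] at this
          · intro h s hs
            cases s with
            | zero => exact hx
            | succ s => rw [hshift]; exact h s (by omega)
        rw [hpre]
        have hmeaspre : MeasurableSet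
            ((fun q : N × (ℕ → N) => (g x q.1, q.2)) ⁻¹' St t) :=
          ((hgmeas.comp (measurable_const.prodMk measurable_fst)).prodMk
            measurable_snd) (hStmeas t)
        rw [Measure.prod_apply hmeaspre]
        calc ∫⁻ a, μ (Prod.mk a ⁻¹'
              ((fun q : N × (ℕ → N) => (g x q.1, q.2)) ⁻¹' St t)) ∂d
            = ∫⁻ a, μ (A t (g x a)) ∂d := rfl
          _ ≤ ∫⁻ a, ENNReal.ofReal (Wfun g Xs' d (fun _ => 1) t (g x a)) ∂d :=
              lintegral_mono fun a => ih (g x a)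
          _ = ENNReal.ofReal (∫ a, Wfun g Xs' d (fun _ => 1) t (g x a) ∂d) :=
              (ofReal_integral_eq_lintegral_ofReal (hQint t x)
                (ae_of_all _ fun a => ((hQp t).2 _).1)).symm
          _ = ENNReal.ofReal (Wfun g Xs' d (fun _ => 1) (t+1) x) := by
              congr 1
              simp [Wfun, hx]
  -- conclusion
  rw [ae_iff]
  have hsubset : ∀ t,
      {ω | ¬ ∃ t : ℕ, ((traj f π x₀ ω t : X) : L1 n) ∈ Xs} ⊆ A t x₀ := by
    intro t ω hω s hs
    simp only [Set.mem_setOf_eq] at hω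
    push_neg at hω
    exact hω s
  have hbound : ∀ t, μ {ω | ¬ ∃ t : ℕ, ((traj f π x₀ ω t : X) : L1 n) ∈ Xs} ≤
      ENNReal.ofReal (Wfun g Xs' d (fun _ => 1) t x₀) :=
    fun t => le_trans (measure_mono (hsubset t)) (hkey t x₀)
  have htend : Tendsto (fun t => ENNReal.ofReal (Wfun g Xs' d (fun _ => 1) t x₀))
      atTop (nhds 0) := by
    rw [← ENNReal.ofReal_zero]
    exact ENNReal.tendsto_ofReal hQ0
  exact le_antisymm (ge_of_tendsto' htend hbound) zero_le
end

section
/- Let (Ω, F, P) be a probability space, (F_t)_{t∈ℕ} a filtration, (Y_t)_{t∈ℕ} an (F_t)-adapted sequence of nonnegative integrable real random variables, T : Ω → ℕ ∪ {∞} an (F_t)-stopping time, and ε > 0. Suppose that for every t ∈ ℕ, E[Y_{t+1} | F_t] ≤ Y_t − ε holds P-almost everywhere on the event {T > t}. Then P[T < ∞] = 1. -/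
open MeasureTheory Filter

/-- Ranking-supermartingale termination principle: if an adapted sequence
of nonnegative integrable random variables decreases in conditional expectation by at least
`ε > 0` on the event `{T > t}` for every `t`, then the stopping time `T` is almost surely
finite. -/
theorem stoppingTime_ae_finite_of_rsm
    {Ω : Type*} {m0 : MeasurableSpace Ω} (P : Measure Ω) [IsProbabilityMeasure P]
    (F : Filtration ℕ m0)
    (Y : ℕ → Ω → ℝ)
    (hadapted : Adapted F Y)
    (hint : ∀ t, Integrable (Y t) P)
    (hnonneg : ∀ t x, 0 ≤ Y t x)
    (T : Ω → ℕ∞)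
    (hT : ∀ t : ℕ, MeasurableSet[F t] {x | T x ≤ (t : ℕ∞)})
    (ε : ℝ) (hε : 0 < ε)
    (hdec : ∀ t : ℕ, ∀ᵐ x ∂P, (t : ℕ∞) < T x → (P[Y (t + 1)|F t]) x ≤ Y t x - ε) :
    P {x | T x < ⊤} = 1 := by
  classical
  set A : ℕ → Set Ω := fun t => {x | (t : ℕ∞) < T x} with hA_def
  have hAeq : ∀ t, A t = {x | T x ≤ (t : ℕ∞)}ᶜ := by
    intro t; ext x
    simp only [hA_def, Set.mem_setOf_eq, Set.mem_compl_iff, lt_iff_not_ge]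
  have hAm : ∀ t, MeasurableSet[F t] (A t) := by
    intro t; rw [hAeq t]; exact (hT t).compl
  have hA : ∀ t, MeasurableSet (A t) := fun t => F.le t _ (hAm t)
  set I : ℕ → ℝ := fun t => ∫ x in A t, Y t x ∂P with hI_def
  have hInonneg : ∀ t, 0 ≤ I t := fun t =>
    setIntegral_nonneg (hA t) (fun x _ => hnonneg t x)
  have hAsub : ∀ t, A (t + 1) ⊆ A t := by
    intro t x hx
    have : ((t : ℕ∞)) < ((t + 1 : ℕ) : ℕ∞) := by exact_mod_cast Nat.lt_succ_self t
    exact lt_trans this hx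
  have htopmem : ∀ t, {x | T x = ⊤} ⊆ A t := by
    intro t x hx
    simp only [Set.mem_setOf_eq] at hx
    simp [hA_def, hx]
  set p : ℝ := (P {x | T x = ⊤}).toReal with hp_def
  have hple : ∀ t, p ≤ (P (A t)).toReal := by
    intro t
    exact ENNReal.toReal_mono (measure_ne_top P _) (measure_mono (htopmem t))
  have hpnonneg : 0 ≤ p := ENNReal.toReal_nonneg
  have hstep : ∀ t, I (t + 1) + ε * (P (A t)).toReal ≤ I t := by
    intro t
    have h1 : ∫ x in A t, (P[Y (t + 1)|F t]) x ∂P = ∫ x in A t, Y (t + 1) x ∂P :=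
      setIntegral_condExp (F.le t) (hint (t + 1)) (hAm t)
    have h2 : ∫ x in A t, (P[Y (t + 1)|F t]) x ∂P ≤ ∫ x in A t, (Y t x - ε) ∂P := by
      refine setIntegral_mono_ae_restrict integrable_condExp.integrableOn
        ((hint t).sub (integrable_const ε)).integrableOn ?_
      exact (ae_restrict_iff' (hA t)).2 (hdec t)
    have h3 : ∫ x in A t, (Y t x - ε) ∂P = I t - ε * (P (A t)).toReal := by
      rw [integral_sub (hint t).integrableOn (integrable_const ε).integrableOn,
        setIntegral_const]
      simp [hI_def, smul_eq_mul, mul_comm, Measure.real]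
    have h4 : I (t + 1) ≤ ∫ x in A t, Y (t + 1) x ∂P := by
      refine setIntegral_mono_set (hint (t + 1)).integrableOn ?_
        (HasSubset.Subset.eventuallyLE (hAsub t))
      exact Filter.Eventually.of_forall (fun x => hnonneg (t + 1) x)
    linarith
  have key : ∀ n : ℕ, I n + (n : ℝ) * (ε * p) ≤ I 0 := by
    intro n
    induction n with
    | zero => simp
    | succ n ih =>
      have h1 := hstep n
      have h2 : ε * p ≤ ε * (P (A n)).toReal :=
        mul_le_mul_of_nonneg_left (hple n) hε.le
      push_cast
      nlinarith
  have hp0 : p = 0 := by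
    by_contra hp
    have hppos : 0 < p := lt_of_le_of_ne hpnonneg (Ne.symm hp)
    obtain ⟨n, hn⟩ := exists_nat_gt (I 0 / (ε * p))
    have hεp : 0 < ε * p := mul_pos hε hppos
    have h1 : I 0 < (n : ℝ) * (ε * p) := by
      rwa [div_lt_iff₀ hεp] at hn
    have h2 := key n
    have h3 := hInonneg n
    linarith
  have htopmeas : MeasurableSet {x | T x = ⊤} := by
    have : {x | T x = ⊤} = ⋂ t : ℕ, A t := by
      ext x
      simp only [Set.mem_setOf_eq, Set.mem_iInter, hA_def]
      constructor
      · intro h t; simp [h]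
      · intro h
        by_contra hne
        obtain ⟨n, hn⟩ := WithTop.ne_top_iff_exists.mp hne
        exact absurd (h n) (by simp [← hn]; exact lt_irrefl _)
    rw [this]
    exact MeasurableSet.iInter (fun t => hA t)
  have hPtop : P {x | T x = ⊤} = 0 := by
    have := hp_def ▸ hp0
    rcases ENNReal.toReal_eq_zero_iff _ |>.mp this with h | h
    · exact h
    · exact absurd h (measure_ne_top P _)
  have hset : {x | T x < ⊤} = {x | T x = ⊤}ᶜ := by
    ext x; simp [lt_top_iff_ne_top]
  rw [hset, prob_compl_eq_one_sub htopmeas, hPtop, tsub_zero]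
end

section
/- Let (Ω, F, P) be a probability space, (F_t)_{t∈ℕ} a filtration, (Y_t)_{t∈ℕ} an (F_t)-adapted sequence of nonnegative integrable real random variables, T : Ω → ℕ ∪ {∞} an (F_t)-stopping time, and ε > 0. Suppose that for every t ∈ ℕ, E[Y_{t+1} | F_t] ≤ Y_t − ε holds P-almost everywhere on the event {T > t}. Then E[T] ≤ E[Y_0] / ε. -/
open MeasureTheory Filter

/-- Quantitative ranking-supermartingale termination principle: if an
adapted sequence of nonnegative integrable random variables decreases in conditional
expectation by at least `ε > 0` on the event `{T > t}` for every `t`, then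
`E[T] = ∑_{t≥0} P[T > t] ≤ E[Y₀]/ε`. -/
theorem stoppingTime_expectation_le_of_rsm
    {Ω : Type*} {m0 : MeasurableSpace Ω} (P : Measure Ω) [IsProbabilityMeasure P]
    (F : Filtration ℕ m0)
    (Y : ℕ → Ω → ℝ)
    (hadapted : Adapted F Y)
    (hint : ∀ t, Integrable (Y t) P)
    (hnonneg : ∀ t x, 0 ≤ Y t x)
    (T : Ω → ℕ∞)
    (hT : ∀ t : ℕ, MeasurableSet[F t] {x | T x ≤ (t : ℕ∞)})
    (ε : ℝ) (hε : 0 < ε)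
    (hdec : ∀ t : ℕ, ∀ᵐ x ∂P, (t : ℕ∞) < T x → (P[Y (t + 1)|F t]) x ≤ Y t x - ε) :
    ∑' t : ℕ, P {x | (t : ℕ∞) < T x} ≤ ENNReal.ofReal ((∫ x, Y 0 x ∂P) / ε) := by
  set A : ℕ → Set Ω := fun t => {x | (t : ℕ∞) < T x} with hA
  have hA_F : ∀ t, MeasurableSet[F t] (A t) := by
    intro t
    have : A t = {x | T x ≤ (t : ℕ∞)}ᶜ := by
      ext x; simp only [A, Set.mem_setOf_eq, Set.mem_compl_iff, not_le]
    rw [this]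
    exact (hT t).compl
  have hA_meas : ∀ t, MeasurableSet (A t) := fun t => F.le t _ (hA_F t)
  have hA_mono : ∀ t, A (t + 1) ⊆ A t := by
    intro t x hx
    have hx' : ((t : ℕ) + 1 : ℕ∞) < T x := hx
    refine lt_of_le_of_lt ?_ hx'
    exact_mod_cast Nat.le_succ t
  -- key inequality
  have key : ∀ t, ε * (P (A t)).toReal + ∫ x in A (t + 1), Y (t + 1) x ∂P
      ≤ ∫ x in A t, Y t x ∂P := by
    intro t
    have h1 : ∫ x in A (t + 1), Y (t + 1) x ∂P ≤ ∫ x in A t, Y (t + 1) x ∂P := by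
      refine setIntegral_mono_set (hint (t + 1)).integrableOn ?_ (Filter.Eventually.of_forall (hA_mono t))
      exact Filter.Eventually.of_forall fun x => hnonneg (t + 1) x
    have h2 : ∫ x in A t, Y (t + 1) x ∂P = ∫ x in A t, (P[Y (t + 1)|F t]) x ∂P :=
      (setIntegral_condExp (F.le t) (hint (t + 1)) (hA_F t)).symm
    have h3 : ∫ x in A t, (P[Y (t + 1)|F t]) x ∂P ≤ ∫ x in A t, (Y t x - ε) ∂P := by
      refine setIntegral_mono_ae_restrict integrable_condExp.integrableOn
        (((hint t).sub (integrable_const ε)).integrableOn) ?_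
      rw [EventuallyLE, ae_restrict_iff' (hA_meas t)]
      filter_upwards [hdec t] with x hx hxA
      exact hx hxA
    have h4 : ∫ x in A t, (Y t x - ε) ∂P
        = (∫ x in A t, Y t x ∂P) - ε * (P (A t)).toReal := by
      rw [integral_sub (hint t).integrableOn (integrable_const ε).integrableOn,
        setIntegral_const, smul_eq_mul]
      show _ - (P (A t)).toReal * ε = _
      ring
    have := le_trans h1 (h2 ▸ le_trans h3 (le_of_eq h4))
    linarith
  have hg_nonneg : ∀ n, 0 ≤ ∫ x in A n, Y n x ∂P := fun n =>
    setIntegral_nonneg (hA_meas n) fun x _ => hnonneg n x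
  have hsum : ∀ n, ∑ t ∈ Finset.range n, ε * (P (A t)).toReal
      + ∫ x in A n, Y n x ∂P ≤ ∫ x in A 0, Y 0 x ∂P := by
    intro n
    induction n with
    | zero => simp
    | succ n ih =>
      rw [Finset.sum_range_succ]
      have := key n
      linarith
  have hsum' : ∀ n, ∑ t ∈ Finset.range n, (P (A t)).toReal ≤ (∫ x, Y 0 x ∂P) / ε := by
    intro n
    rw [le_div_iff₀ hε]
    have h0 : ∫ x in A 0, Y 0 x ∂P ≤ ∫ x, Y 0 x ∂P :=
      setIntegral_le_integral (hint 0) (Filter.Eventually.of_forall fun x => hnonneg 0 x)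
    have := hsum n
    have := hg_nonneg n
    calc (∑ t ∈ Finset.range n, (P (A t)).toReal) * ε
        = ∑ t ∈ Finset.range n, ε * (P (A t)).toReal := by
          rw [Finset.sum_mul]; congr 1; ext t; ring
      _ ≤ ∫ x, Y 0 x ∂P := by linarith
  rw [ENNReal.tsum_eq_iSup_nat]
  refine iSup_le fun n => ?_
  have hfin : ∀ t, P (A t) ≠ ⊤ := fun t => measure_ne_top P _
  calc ∑ t ∈ Finset.range n, P (A t)
      = ENNReal.ofReal (∑ t ∈ Finset.range n, (P (A t)).toReal) := by
        rw [ENNReal.ofReal_sum_of_nonneg fun t _ => ENNReal.toReal_nonneg]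
        exact Finset.sum_congr rfl fun t _ => (ENNReal.ofReal_toReal (hfin t)).symm
    _ ≤ ENNReal.ofReal ((∫ x, Y 0 x ∂P) / ε) := ENNReal.ofReal_le_ofReal (hsum' n)
end

section
/- Let X ⊆ ℝⁿ be compact, f : X × U × N → X Borel measurable, π : X → U Borel measurable, d a probability distribution on N, X_s ⊆ X Borel measurable, V : X → ℝ nonnegative and continuous, and ε > 0 such that for every x ∈ X \ X_s, E_{ω∼d}[V(f(x, π(x), ω))] ≤ V(x) − ε. Fix x₀ ∈ X, let the trajectory on the product space (N^ℕ, d^ℕ) be x_{t+1}(ω) = f(x_t(ω), π(x_t(ω)), ω_t), and let A_t = {ω ∈ N^ℕ : x_s(ω) ∉ X_s for all s ≤ t} be the event that X_s has not been reached by time t. Then for every t ∈ ℕ, E_{d^ℕ}[V(x_{t+1}) · 1_{A_{t+1}}] ≤ E_{d^ℕ}[V(x_t) · 1_{A_t}] − ε · P_{d^ℕ}[A_{t+1}]. -/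
open MeasureTheory Filter

lemma traj_congr {X U N : Type*} (f : X → U → N → X) (π : X → U) (x₀ : X) (ω ω' : ℕ → N) :
    ∀ s, (∀ i < s, ω i = ω' i) → traj f π x₀ ω s = traj f π x₀ ω' s
  | 0, _ => rfl
  | s+1, h => by
      have ih := traj_congr f π x₀ ω ω' s (fun i hi => h i (Nat.lt_succ_of_lt hi))
      simp only [traj, ih, h s (Nat.lt_succ_self s)]

lemma traj_measurable {X U N : Type*} [MeasurableSpace X] [MeasurableSpace U] [MeasurableSpace N]
    (f : X → U → N → X) (π : X → U)
    (hf : Measurable fun q : X × U × N => f q.1 q.2.1 q.2.2)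
    (hπ : Measurable π) (x₀ : X) :
    ∀ s, Measurable fun ω : ℕ → N => traj f π x₀ ω s
  | 0 => measurable_const
  | s+1 => by
      have ih := traj_measurable f π hf hπ x₀ s
      have heq : (fun ω : ℕ → N => traj f π x₀ ω (s+1)) =
          (fun q : X × U × N => f q.1 q.2.1 q.2.2) ∘
            (fun ω => (traj f π x₀ ω s, π (traj f π x₀ ω s), ω s)) := rfl
      rw [heq]
      exact hf.comp (ih.prodMk ((hπ.comp ih).prodMk (measurable_pi_apply s)))

def extnd {N : Type*} (n₀ : N) {k : ℕ} (v : Fin k → N) : ℕ → N :=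
  fun i => if h : i < k then v ⟨i, h⟩ else n₀

lemma measurable_extnd {N : Type*} [MeasurableSpace N] (n₀ : N) (k : ℕ) :
    Measurable fun v : Fin k → N => extnd n₀ v := by
  apply measurable_pi_lambda
  intro i
  unfold extnd
  by_cases h : i < k
  · simpa [h] using measurable_pi_apply (⟨i, h⟩ : Fin k)
  · simp [h]

lemma extnd_lt {N : Type*} (n₀ : N) {k : ℕ} (v : Fin k → N) {i : ℕ} (h : i < k) :
    extnd n₀ v i = v ⟨i, h⟩ := dif_pos h

lemma integrable_of_bounded {α : Type*} [MeasurableSpace α] (ν : Measure α) [IsFiniteMeasure ν]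
    {h : α → ℝ} (hm : AEStronglyMeasurable h ν) {C : ℝ} (hb : ∀ a, |h a| ≤ C) :
    Integrable h ν :=
  (integrable_const C).mono' hm (Eventually.of_forall (by simpa [Real.norm_eq_abs] using hb))

lemma abs_indicator_le' {α : Type*} (s : Set α) (h : α → ℝ) {C : ℝ} (hC : 0 ≤ C)
    (hb : ∀ a, |h a| ≤ C) (a : α) : |s.indicator h a| ≤ C := by
  by_cases ha : a ∈ s
  · simpa [Set.indicator_of_mem ha] using hb a
  · simpa [Set.indicator_of_notMem ha] using hC

/-- Drift inequality for the stopped value process: with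
`A_t = {ω : x_s(ω) ∉ X_s for all s ≤ t}`,
`E[V(x_{t+1})·1_{A_{t+1}}] ≤ E[V(x_t)·1_{A_t}] − ε·P[A_{t+1}]`. -/
theorem rsm_drift_inequality
    {n m p : ℕ} (X : Set (L1 n)) (U : Set (L1 m)) (N : Set (L1 p))
    (hX : IsCompact X)
    (f : X → U → N → X) (π : X → U)
    (hfmeas : Measurable fun q : X × U × N => f q.1 q.2.1 q.2.2)
    (hπmeas : Measurable π)
    (d : Measure N) [IsProbabilityMeasure d]
    -- `μ` is the infinite product measure `d^ℕ` on `N^ℕ`, characterized on cylinders: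
    (μ : Measure (ℕ → N)) [IsProbabilityMeasure μ]
    (hμ : ∀ (s : Finset ℕ) (B : ℕ → Set N), (∀ i, MeasurableSet (B i)) →
      μ {ω | ∀ i ∈ s, ω i ∈ B i} = ∏ i ∈ s, d (B i))
    (Xs : Set (L1 n)) (hXsMeas : MeasurableSet Xs)
    (V : X → ℝ) (hVnonneg : ∀ x, 0 ≤ V x) (hVcont : Continuous V)
    (ε : ℝ) (hε : 0 < ε)
    (hdec : ∀ x : X, (x : L1 n) ∉ Xs → ∫ ω, V (f x (π x) ω) ∂d ≤ V x - ε)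
    (x₀ : X) (t : ℕ) :
    ∫ ω, Set.indicator
        {ω' : ℕ → N | ∀ s ≤ t + 1, ((traj f π x₀ ω' s : X) : L1 n) ∉ Xs}
        (fun ω' => V (traj f π x₀ ω' (t + 1))) ω ∂μ ≤
      (∫ ω, Set.indicator
        {ω' : ℕ → N | ∀ s ≤ t, ((traj f π x₀ ω' s : X) : L1 n) ∉ Xs}
        (fun ω' => V (traj f π x₀ ω' t)) ω ∂μ)
      - ε * (μ {ω' : ℕ → N | ∀ s ≤ t + 1, ((traj f π x₀ ω' s : X) : L1 n) ∉ Xs}).toReal := by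
  classical
  -- N is nonempty
  have hNne : Nonempty ↥N := by
    by_contra h
    rw [not_nonempty_iff] at h
    have h1 : (Set.univ : Set ↥N) = ∅ := Set.univ_eq_empty_iff.mpr h
    have h2 := measure_univ (μ := d)
    rw [h1] at h2
    simp at h2
  obtain ⟨n₀⟩ := hNne
  haveI : Nonempty ↥X := ⟨x₀⟩
  -- V is bounded
  haveI hXc : CompactSpace ↥X := isCompact_iff_compactSpace.mp hX
  obtain ⟨xm, -, hxm⟩ := isCompact_univ.exists_isMaxOn Set.univ_nonempty hVcont.continuousOn
  set M : ℝ := V xm with hMdef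
  have hMb : ∀ x : ↥X, V x ≤ M := fun x => hxm (Set.mem_univ x)
  have hM0 : 0 ≤ M := le_trans (hVnonneg x₀) (hMb x₀)
  have hVabs : ∀ x : ↥X, |V x| ≤ M := fun x => abs_le.mpr ⟨by linarith [hVnonneg x], hMb x⟩
  -- abbreviations
  set A1 : Set (ℕ → ↥N) :=
    {ω' | ∀ s ≤ t + 1, ((traj f π x₀ ω' s : ↥X) : L1 n) ∉ Xs} with hA1def
  set A0 : Set (ℕ → ↥N) :=
    {ω' | ∀ s ≤ t, ((traj f π x₀ ω' s : ↥X) : L1 n) ∉ Xs} with hA0def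
  have hA1sub : A1 ⊆ A0 := fun ω h s hs => h s (le_trans hs (Nat.le_succ t))
  have htraj := traj_measurable f π hfmeas hπmeas x₀
  have hVm : Measurable V := hVcont.measurable
  have hAmeas : ∀ k : ℕ,
      MeasurableSet {ω' : ℕ → ↥N | ∀ s ≤ k, ((traj f π x₀ ω' s : ↥X) : L1 n) ∉ Xs} := by
    intro k
    have hrw : {ω' : ℕ → ↥N | ∀ s ≤ k, ((traj f π x₀ ω' s : ↥X) : L1 n) ∉ Xs}
        = ⋂ s ∈ Set.Iic k,
            (fun ω => traj f π x₀ ω s) ⁻¹' ((fun x : ↥X => (x : L1 n)) ⁻¹' Xsᶜ) := by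
      ext ω
      simp [Set.mem_iInter]
    rw [hrw]
    exact MeasurableSet.biInter (Set.to_countable _)
      fun s _ => (htraj s) (measurable_subtype_coe hXsMeas.compl)
  have hA1meas : MeasurableSet A1 := hA1def ▸ hAmeas (t + 1)
  have hA0meas : MeasurableSet A0 := hA0def ▸ hAmeas t
  -- membership in A_k depends only on the first k coordinates
  have hmemgen : ∀ (k : ℕ) (ω ω' : ℕ → ↥N), (∀ i < k, ω i = ω' i) →
      ((∀ s ≤ k, ((traj f π x₀ ω s : ↥X) : L1 n) ∉ Xs) ↔
        ∀ s ≤ k, ((traj f π x₀ ω' s : ↥X) : L1 n) ∉ Xs) := by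
    intro k ω ω' hagree
    have hc : ∀ s ≤ k, traj f π x₀ ω s = traj f π x₀ ω' s := fun s hs =>
      traj_congr f π x₀ ω ω' s (fun i hi => hagree i (lt_of_lt_of_le hi hs))
    constructor
    · intro h s hs; rw [← hc s hs]; exact h s hs
    · intro h s hs; rw [hc s hs]; exact h s hs
  have hmemA1 : ∀ (ω ω' : ℕ → ↥N), (∀ i < t + 1, ω i = ω' i) → (ω ∈ A1 ↔ ω' ∈ A1) := by
    intro ω ω' h
    rw [hA1def]
    exact hmemgen (t + 1) ω ω' h
  have hmemA0 : ∀ (ω ω' : ℕ → ↥N), (∀ i < t, ω i = ω' i) → (ω ∈ A0 ↔ ω' ∈ A0) := by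
    intro ω ω' h
    rw [hA0def]
    exact hmemgen t ω ω' h
  -- the pushforward of μ to finitely many coordinates is the finite product measure
  have hJm : ∀ k : ℕ, Measurable fun (ω : ℕ → ↥N) (i : Fin k) => ω i :=
    fun k => measurable_pi_lambda _ fun i => measurable_pi_apply _
  have hmap : ∀ k : ℕ, μ.map (fun ω (i : Fin k) => ω i) = Measure.pi (fun _ : Fin k => d) := by
    intro k
    refine (Measure.pi_eq fun B hB => ?_).symm
    set B' : ℕ → Set ↥N := fun j => if h : j < k then B ⟨j, h⟩ else Set.univ with hB'def
    have hB'm : ∀ i, MeasurableSet (B' i) := by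
      intro i; by_cases h : i < k <;> simp [hB'def, h, hB]
    rw [Measure.map_apply (hJm k) (MeasurableSet.univ_pi hB)]
    have hset : (fun (ω : ℕ → ↥N) (i : Fin k) => ω i) ⁻¹' Set.univ.pi B
        = {ω : ℕ → ↥N | ∀ i ∈ Finset.range k, ω i ∈ B' i} := by
      ext ω
      simp only [Set.mem_preimage, Set.mem_pi, Set.mem_univ, true_implies,
        Set.mem_setOf_eq, Finset.mem_range]
      constructor
      · intro h i hi
        simpa [hB'def, hi] using h ⟨i, hi⟩
      · intro h i
        have := h i.1 i.isLt
        simpa [hB'def, i.isLt] using this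
    rw [hset, hμ _ _ hB'm]
    rw [← Fin.prod_univ_eq_prod_range (fun j => d (B' j)) k]
    exact Finset.prod_congr rfl fun i _ => by simp [hB'def, i.isLt]
  have htrans : ∀ (k : ℕ) (h : (Fin k → ↥N) → ℝ), Measurable h →
      ∫ ω, h (fun i : Fin k => ω i) ∂μ = ∫ v, h v ∂(Measure.pi (fun _ : Fin k => d)) := by
    intro k h hm
    rw [← hmap k, integral_map (hJm k).aemeasurable hm.aestronglyMeasurable]
  -- finite product spaces
  set P : Measure (Fin (t + 1) → ↥N) := Measure.pi (fun _ : Fin (t + 1) => d) with hPdef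
  set P' : Measure (Fin t → ↥N) := Measure.pi (fun _ : Fin t => d) with hP'def
  haveI hPinst : IsProbabilityMeasure P := by rw [hPdef]; infer_instance
  haveI hP'inst : IsProbabilityMeasure P' := by rw [hP'def]; infer_instance
  set e := MeasurableEquiv.piFinSuccAbove (fun _ : Fin (t + 1) => ↥N) (Fin.last t) with hedef
  have mp : MeasurePreserving e P (d.prod P') :=
    measurePreserving_piFinSuccAbove (fun _ : Fin (t + 1) => d) (Fin.last t)
  -- evaluation of the equivalence
  have hesymm_last : ∀ (y : ↥N) (w : Fin t → ↥N), e.symm (y, w) (Fin.last t) = y := by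
    intro y w
    rw [hedef, MeasurableEquiv.piFinSuccAbove_symm_apply, Fin.insertNthEquiv_apply,
      Fin.insertNth_apply_same]
  have hesymm_lt : ∀ (y : ↥N) (w : Fin t → ↥N) (i : ℕ) (hi : i < t),
      e.symm (y, w) ⟨i, Nat.lt_succ_of_lt hi⟩ = w ⟨i, hi⟩ := by
    intro y w i hi
    have h1 : (⟨i, Nat.lt_succ_of_lt hi⟩ : Fin (t + 1)) = (Fin.last t).succAbove ⟨i, hi⟩ := by
      rw [Fin.succAbove_last]; rfl
    rw [hedef, MeasurableEquiv.piFinSuccAbove_symm_apply, Fin.insertNthEquiv_apply, h1,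
      Fin.insertNth_apply_succAbove]
  have he_snd : ∀ (v : Fin (t + 1) → ↥N) (j : Fin t),
      (e v).2 j = v ⟨j.1, Nat.lt_succ_of_lt j.2⟩ := by
    intro v j
    have h1 : (⟨j.1, Nat.lt_succ_of_lt j.2⟩ : Fin (t + 1)) = (Fin.last t).succAbove j := by
      rw [Fin.succAbove_last]; rfl
    rw [hedef, MeasurableEquiv.piFinSuccAbove_apply, h1]
    rfl
  -- agreements of extensions
  have hext1 : ∀ (y : ↥N) (w : Fin t → ↥N), ∀ i < t,
      extnd n₀ (e.symm (y, w)) i = extnd n₀ w i := by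
    intro y w i hi
    rw [extnd_lt n₀ _ (Nat.lt_succ_of_lt hi), extnd_lt n₀ _ hi, hesymm_lt y w i hi]
  have hext2 : ∀ (y : ↥N) (w : Fin t → ↥N), extnd n₀ (e.symm (y, w)) t = y := by
    intro y w
    rw [extnd_lt n₀ _ (Nat.lt_succ_self t)]
    exact hesymm_last y w
  have hext3 : ∀ (v : Fin (t + 1) → ↥N), ∀ i < t,
      extnd n₀ ((e v).2) i = extnd n₀ v i := by
    intro v i hi
    rw [extnd_lt n₀ _ hi, extnd_lt n₀ _ (Nat.lt_succ_of_lt hi), he_snd v ⟨i, hi⟩]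
  -- the four auxiliary functions on finite-dimensional spaces
  set Ft : (Fin (t + 1) → ↥N) → ℝ := fun v =>
    Set.indicator {v : Fin (t + 1) → ↥N | extnd n₀ v ∈ A1}
      (fun v => V (traj f π x₀ (extnd n₀ v) (t + 1))) v with hFt
  set H : (Fin (t + 1) → ↥N) → ℝ := fun v =>
    Set.indicator {v : Fin (t + 1) → ↥N | extnd n₀ v ∈ A0}
      (fun v => V (f (traj f π x₀ (extnd n₀ v) t) (π (traj f π x₀ (extnd n₀ v) t))
        (v (Fin.last t)))) v with hH
  set ψ : (Fin t → ↥N) → ℝ := fun w =>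
    Set.indicator {w : Fin t → ↥N | extnd n₀ w ∈ A0}
      (fun w => V (traj f π x₀ (extnd n₀ w) t) - ε) w with hψ
  set φ : (Fin (t + 1) → ↥N) → ℝ := fun v =>
    Set.indicator {v : Fin (t + 1) → ↥N | extnd n₀ v ∈ A0}
      (fun v => V (traj f π x₀ (extnd n₀ v) t) - ε) v with hφ
  -- measurability
  have hexm1 := measurable_extnd (N := ↥N) n₀ (t + 1)
  have hexm0 := measurable_extnd (N := ↥N) n₀ t
  have hS1 : MeasurableSet {v : Fin (t + 1) → ↥N | extnd n₀ v ∈ A1} := hexm1 hA1meas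
  have hS0 : MeasurableSet {v : Fin (t + 1) → ↥N | extnd n₀ v ∈ A0} := hexm1 hA0meas
  have hS0' : MeasurableSet {w : Fin t → ↥N | extnd n₀ w ∈ A0} := hexm0 hA0meas
  have htrajm1 : Measurable fun v : Fin (t + 1) → ↥N => traj f π x₀ (extnd n₀ v) (t + 1) :=
    (htraj (t + 1)).comp hexm1
  have htrajm0 : Measurable fun v : Fin (t + 1) → ↥N => traj f π x₀ (extnd n₀ v) t :=
    (htraj t).comp hexm1
  have htrajm0' : Measurable fun w : Fin t → ↥N => traj f π x₀ (extnd n₀ w) t :=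
    (htraj t).comp hexm0
  have hFtm : Measurable Ft := by
    rw [hFt]; exact (hVm.comp htrajm1).indicator hS1
  have hHm : Measurable H := by
    rw [hH]
    have hfm : Measurable fun v : Fin (t + 1) → ↥N =>
        f (traj f π x₀ (extnd n₀ v) t) (π (traj f π x₀ (extnd n₀ v) t)) (v (Fin.last t)) := by
      have heq : (fun v : Fin (t + 1) → ↥N =>
          f (traj f π x₀ (extnd n₀ v) t) (π (traj f π x₀ (extnd n₀ v) t)) (v (Fin.last t)))
          = (fun q : ↥X × ↥U × ↥N => f q.1 q.2.1 q.2.2) ∘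
            (fun v => (traj f π x₀ (extnd n₀ v) t,
              π (traj f π x₀ (extnd n₀ v) t), v (Fin.last t))) := rfl
      rw [heq]
      exact hfmeas.comp (htrajm0.prodMk ((hπmeas.comp htrajm0).prodMk
        (measurable_pi_apply _)))
    exact (hVm.comp hfm).indicator hS0
  have hψm : Measurable ψ := by
    rw [hψ]; exact ((hVm.comp htrajm0').sub measurable_const).indicator hS0'
  have hφm : Measurable φ := by
    rw [hφ]; exact ((hVm.comp htrajm0).sub measurable_const).indicator hS0
  -- bounds
  have hMε : 0 ≤ M + ε := by linarith
  have hsubb : ∀ x : ↥X, |V x - ε| ≤ M + ε := by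
    intro x
    have h1 := hVnonneg x
    have h2 := hMb x
    rw [abs_le]; constructor <;> [linarith; linarith]
  have hFtb : ∀ v, |Ft v| ≤ M := by
    intro v; rw [hFt]; exact abs_indicator_le' _ _ hM0 (fun v => hVabs _) v
  have hHb : ∀ v, |H v| ≤ M := by
    intro v; rw [hH]; exact abs_indicator_le' _ _ hM0 (fun v => hVabs _) v
  have hψb : ∀ w, |ψ w| ≤ M + ε := by
    intro w; rw [hψ]; exact abs_indicator_le' _ _ hMε (fun w => hsubb _) w
  have hφb : ∀ v, |φ v| ≤ M + ε := by
    intro v; rw [hφ]; exact abs_indicator_le' _ _ hMε (fun v => hsubb _) v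
  -- integrability
  have hFti : Integrable Ft P := integrable_of_bounded P hFtm.aestronglyMeasurable hFtb
  have hHi : Integrable H P := integrable_of_bounded P hHm.aestronglyMeasurable hHb
  have hψi : Integrable ψ P' := integrable_of_bounded P' hψm.aestronglyMeasurable hψb
  have hHe : Integrable (fun z : ↥N × (Fin t → ↥N) => H (e.symm z)) (d.prod P') :=
    integrable_of_bounded _ (hHm.comp e.symm.measurable).aestronglyMeasurable
      (fun z => hHb (e.symm z))
  have hIntInner : Integrable (fun w => ∫ y, H (e.symm (y, w)) ∂d) P' :=
    hHe.integral_prod_right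
  -- step 1 : transfer the LHS to the finite product space
  have step1 : ∫ ω, Set.indicator A1 (fun ω' => V (traj f π x₀ ω' (t + 1))) ω ∂μ
      = ∫ v, Ft v ∂P := by
    rw [hPdef, ← htrans (t + 1) Ft hFtm]
    refine integral_congr_ae (Eventually.of_forall fun ω => ?_)
    have hag : ∀ i < t + 1, ω i = extnd n₀ (fun j : Fin (t + 1) => ω j) i :=
      fun i hi => (extnd_lt n₀ (fun j : Fin (t + 1) => ω j) hi).symm
    simp only [hFt]
    by_cases hω : ω ∈ A1
    · have h1 : (fun j : Fin (t + 1) => ω j) ∈ {v : Fin (t + 1) → ↥N | extnd n₀ v ∈ A1} :=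
        (hmemA1 _ _ hag).mp hω
      rw [Set.indicator_of_mem hω, Set.indicator_of_mem h1,
        traj_congr f π x₀ ω (extnd n₀ (fun j : Fin (t + 1) => ω j)) (t + 1) hag]
    · have h1 : (fun j : Fin (t + 1) => ω j) ∉ {v : Fin (t + 1) → ↥N | extnd n₀ v ∈ A1} :=
        fun hc => hω ((hmemA1 _ _ hag).mpr hc)
      rw [Set.indicator_of_notMem hω, Set.indicator_of_notMem h1]
  -- step 2 : pointwise bound Ft ≤ H
  have hpw : ∀ v, Ft v ≤ H v := by
    intro v
    simp only [hFt, hH]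
    by_cases hv : extnd n₀ v ∈ A1
    · have hv1 : v ∈ {v : Fin (t + 1) → ↥N | extnd n₀ v ∈ A1} := hv
      have hv0 : v ∈ {v : Fin (t + 1) → ↥N | extnd n₀ v ∈ A0} := hA1sub hv
      rw [Set.indicator_of_mem hv1, Set.indicator_of_mem hv0]
      have h1 : traj f π x₀ (extnd n₀ v) (t + 1)
          = f (traj f π x₀ (extnd n₀ v) t) (π (traj f π x₀ (extnd n₀ v) t))
            (extnd n₀ v t) := rfl
      have h2 : extnd n₀ v t = v (Fin.last t) := extnd_lt n₀ v (Nat.lt_succ_self t)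
      rw [h1, h2]
    · have hv1 : v ∉ {v : Fin (t + 1) → ↥N | extnd n₀ v ∈ A1} := hv
      rw [Set.indicator_of_notMem hv1]
      exact Set.indicator_nonneg (fun v _ => hVnonneg _) v
  -- step 5 : inner bound after Fubini
  have hinner : ∀ w : Fin t → ↥N, ∫ y, H (e.symm (y, w)) ∂d ≤ ψ w := by
    intro w
    by_cases hw : extnd n₀ w ∈ A0
    · have hw' := hw
      rw [hA0def] at hw'
      have hxnot : ((traj f π x₀ (extnd n₀ w) t : ↥X) : L1 n) ∉ Xs := hw' t le_rfl
      have hval : ∀ y : ↥N, H (e.symm (y, w))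
          = V (f (traj f π x₀ (extnd n₀ w) t) (π (traj f π x₀ (extnd n₀ w) t)) y) := by
        intro y
        have hag : ∀ i < t, extnd n₀ (e.symm (y, w)) i = extnd n₀ w i := hext1 y w
        have hmem : e.symm (y, w) ∈ {v : Fin (t + 1) → ↥N | extnd n₀ v ∈ A0} :=
          (hmemA0 _ _ hag).mpr hw
        simp only [hH]
        rw [Set.indicator_of_mem hmem,
          traj_congr f π x₀ (extnd n₀ (e.symm (y, w))) (extnd n₀ w) t hag,
          hesymm_last y w]
      calc ∫ y, H (e.symm (y, w)) ∂d
          = ∫ y, V (f (traj f π x₀ (extnd n₀ w) t) (π (traj f π x₀ (extnd n₀ w) t)) y) ∂d :=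
            integral_congr_ae (Eventually.of_forall hval)
        _ ≤ V (traj f π x₀ (extnd n₀ w) t) - ε := hdec _ hxnot
        _ = ψ w := by
            have hw0 : w ∈ {w : Fin t → ↥N | extnd n₀ w ∈ A0} := hw
            simp only [hψ]
            rw [Set.indicator_of_mem hw0]
    · have hval : ∀ y : ↥N, H (e.symm (y, w)) = 0 := by
        intro y
        have hag : ∀ i < t, extnd n₀ (e.symm (y, w)) i = extnd n₀ w i := hext1 y w
        have hmem : e.symm (y, w) ∉ {v : Fin (t + 1) → ↥N | extnd n₀ v ∈ A0} :=
          fun hc => hw ((hmemA0 _ _ hag).mp hc)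
        simp only [hH]
        exact Set.indicator_of_notMem hmem _
      have hψ0 : ψ w = 0 := by
        have hw0 : w ∉ {w : Fin t → ↥N | extnd n₀ w ∈ A0} := hw
        simp only [hψ]; exact Set.indicator_of_notMem hw0 _
      rw [hψ0]
      simp [hval]
  -- steps 7-9 : return to the infinite product space
  have h7 : ∫ w, ψ w ∂P' = ∫ z : ↥N × (Fin t → ↥N), ψ z.2 ∂(d.prod P') := by
    have hsnd : (d.prod P').map Prod.snd = P' := by
      rw [Measure.map_snd_prod]; simp
    have hmi := integral_map (μ := d.prod P') measurable_snd.aemeasurable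
      hψm.aestronglyMeasurable
    rw [hsnd] at hmi
    exact hmi
  have h8 : ∫ z : ↥N × (Fin t → ↥N), ψ z.2 ∂(d.prod P') = ∫ v, ψ ((e v).2) ∂P :=
    (mp.integral_comp e.measurableEmbedding (fun z => ψ z.2)).symm
  have hψe : ∀ v : Fin (t + 1) → ↥N, ψ ((e v).2) = φ v := by
    intro v
    have hag : ∀ i < t, extnd n₀ ((e v).2) i = extnd n₀ v i := hext3 v
    simp only [hψ, hφ]
    by_cases hv : extnd n₀ v ∈ A0
    · have hm2 : (e v).2 ∈ {w : Fin t → ↥N | extnd n₀ w ∈ A0} := (hmemA0 _ _ hag).mpr hv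
      have hv0 : v ∈ {v : Fin (t + 1) → ↥N | extnd n₀ v ∈ A0} := hv
      rw [Set.indicator_of_mem hm2, Set.indicator_of_mem hv0,
        traj_congr f π x₀ (extnd n₀ ((e v).2)) (extnd n₀ v) t hag]
    · have hm2 : (e v).2 ∉ {w : Fin t → ↥N | extnd n₀ w ∈ A0} :=
        fun hc => hv ((hmemA0 _ _ hag).mp hc)
      have hv0 : v ∉ {v : Fin (t + 1) → ↥N | extnd n₀ v ∈ A0} := hv
      rw [Set.indicator_of_notMem hm2, Set.indicator_of_notMem hv0]
  -- step 10 : transfer back to μ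
  have hstep10 : ∫ v, φ v ∂P
      = ∫ ω, Set.indicator A0 (fun ω' => V (traj f π x₀ ω' t) - ε) ω ∂μ := by
    rw [hPdef, ← htrans (t + 1) φ hφm]
    refine integral_congr_ae (Eventually.of_forall fun ω => ?_)
    have hag : ∀ i < t, extnd n₀ (fun j : Fin (t + 1) => ω j) i = ω i :=
      fun i hi => extnd_lt n₀ (fun j : Fin (t + 1) => ω j) (Nat.lt_succ_of_lt hi)
    simp only [hφ]
    by_cases hω : ω ∈ A0
    · have h1 : (fun j : Fin (t + 1) => ω j) ∈ {v : Fin (t + 1) → ↥N | extnd n₀ v ∈ A0} :=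
        (hmemA0 _ _ hag).mpr hω
      rw [Set.indicator_of_mem hω, Set.indicator_of_mem h1,
        traj_congr f π x₀ (extnd n₀ (fun j : Fin (t + 1) => ω j)) ω t hag]
    · have h1 : (fun j : Fin (t + 1) => ω j) ∉ {v : Fin (t + 1) → ↥N | extnd n₀ v ∈ A0} :=
        fun hc => hω ((hmemA0 _ _ hag).mp hc)
      rw [Set.indicator_of_notMem hω, Set.indicator_of_notMem h1]
  -- step 11 : split the integral
  have hG1i : Integrable (Set.indicator A0 (fun ω' => V (traj f π x₀ ω' t))) μ :=
    integrable_of_bounded μ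
      ((hVm.comp (htraj t)).indicator hA0meas).aestronglyMeasurable
      (abs_indicator_le' _ _ hM0 (fun ω => hVabs _))
  have hG2i : Integrable (Set.indicator A0 (fun _ : ℕ → ↥N => ε)) μ :=
    integrable_of_bounded μ
      ((measurable_const (a := ε)).indicator hA0meas).aestronglyMeasurable
      (abs_indicator_le' _ _ (le_of_lt hε) (fun ω => by rw [abs_of_pos hε]))
  have hsplit : ∫ ω, Set.indicator A0 (fun ω' => V (traj f π x₀ ω' t) - ε) ω ∂μ
      = (∫ ω, Set.indicator A0 (fun ω' => V (traj f π x₀ ω' t)) ω ∂μ)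
        - ε * (μ A0).toReal := by
    have hfun : Set.indicator A0 (fun ω' : ℕ → ↥N => V (traj f π x₀ ω' t) - ε)
        = fun ω => Set.indicator A0 (fun ω' => V (traj f π x₀ ω' t)) ω
          - Set.indicator A0 (fun _ => ε) ω := by
      funext ω
      by_cases h : ω ∈ A0 <;>
        simp [Set.indicator_of_mem, Set.indicator_of_notMem, h]
    rw [hfun, integral_sub hG1i hG2i, integral_indicator_const ε hA0meas]
    rw [smul_eq_mul, measureReal_def]
    ring
  have hμ10 : (μ A1).toReal ≤ (μ A0).toReal :=
    ENNReal.toReal_mono (measure_ne_top μ A0) (measure_mono hA1sub)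
  calc ∫ ω, Set.indicator A1 (fun ω' => V (traj f π x₀ ω' (t + 1))) ω ∂μ
      = ∫ v, Ft v ∂P := step1
    _ ≤ ∫ v, H v ∂P := integral_mono hFti hHi hpw
    _ = ∫ z : ↥N × (Fin t → ↥N), H (e.symm z) ∂(d.prod P') :=
        ((mp.symm e).integral_comp e.symm.measurableEmbedding H).symm
    _ = ∫ w, ∫ y, H (e.symm (y, w)) ∂d ∂P' := integral_prod_symm _ hHe
    _ ≤ ∫ w, ψ w ∂P' := integral_mono hIntInner hψi hinner
    _ = ∫ z : ↥N × (Fin t → ↥N), ψ z.2 ∂(d.prod P') := h7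
    _ = ∫ v, ψ ((e v).2) ∂P := h8
    _ = ∫ v, φ v ∂P := integral_congr_ae (Eventually.of_forall hψe)
    _ = ∫ ω, Set.indicator A0 (fun ω' => V (traj f π x₀ ω' t) - ε) ω ∂μ := hstep10
    _ = (∫ ω, Set.indicator A0 (fun ω' => V (traj f π x₀ ω' t)) ω ∂μ)
        - ε * (μ A0).toReal := hsplit
    _ ≤ (∫ ω, Set.indicator A0 (fun ω' => V (traj f π x₀ ω' t)) ω ∂μ)
        - ε * (μ A1).toReal := by
        have := mul_le_mul_of_nonneg_left hμ10 (le_of_lt hε)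
        linarith
end
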